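/- arXiv:2501.03710 — 8 statements merged into one kernel-verified Lean document; each statement's English description precedes it below -/
import Mathlib

section
/- For every finite simple graph G and every linear order π* of the vertices of the bipartite double cover G*, there exists an induced matching M of G* that neatly crosses π* and satisfies 2·|M| ≥ lsimw(G). -/
/-! ## Common definitions -/

/-- A (partial) assignment over variable type `V`. -/
abbrev Asg (V : Type*) := V → Option Bool

/-- The domain (set of variables) of an assignment. -/
def Asg.dom {V : Type*} (g : Asg V) : Set V := {x | g x ≠ none}

/-- Union of two assignments (the left one takes precedence where both are defined). -/
def Asg.union {V : Type*} (g h : Asg V) : Asg V := fun x => (g x).orElse (fun _ => h x)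

/-- A set of assignments is uniform with common domain `S`. -/
def UniformOn {V : Type*} (H : Set (Asg V)) (S : Set V) : Prop := ∀ g ∈ H, g.dom = S

/-- The product `H₁ × H₂` of two sets of assignments. -/
def AsgProd {V : Type*} (H₁ H₂ : Set (Asg V)) : Set (Asg V) := Set.image2 Asg.union H₁ H₂

/-- `H`, a uniform set of assignments with variable set `W`, is a rectangle that
breaks `Y ⊆ W`: it has nonempty uniform witnesses whose nonempty variable sets
partition `W` and both meet `Y`. -/
def BreaksOn {V : Type*} (H : Set (Asg V)) (W Y : Set V) : Prop :=
  ∃ (H₁ H₂ : Set (Asg V)) (S₁ S₂ : Set V),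
    H₁.Nonempty ∧ H₂.Nonempty ∧ UniformOn H₁ S₁ ∧ UniformOn H₂ S₂ ∧
    S₁.Nonempty ∧ S₂.Nonempty ∧ S₁ ∩ S₂ = ∅ ∧ S₁ ∪ S₂ = W ∧
    H = AsgProd H₁ H₂ ∧ (Y ∩ S₁).Nonempty ∧ (Y ∩ S₂).Nonempty

/-- Combination of finitely many assignments (with pairwise disjoint domains). -/
def Asg.combine {V : Type*} {m : ℕ} (c : Fin m → Asg V) : Asg V :=
  fun x => (List.finRange m).foldr (fun i acc => (c i x).orElse (fun _ => acc)) none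

/-- The product `H 0 × ⋯ × H (m-1)` of finitely many sets of assignments. -/
def bigProd {V : Type*} {m : ℕ} (H : Fin m → Set (Asg V)) : Set (Asg V) :=
  {g | ∃ c : Fin m → Asg V, (∀ i, c i ∈ H i) ∧ g = Asg.combine c}

/-- `M` is a matching of `G` (a set of pairwise disjoint edges of `G`). -/
def IsMatchingSet {V : Type*} (G : SimpleGraph V) (M : Set (Sym2 V)) : Prop :=
  M ⊆ G.edgeSet ∧ ∀ e ∈ M, ∀ f ∈ M, e ≠ f → ∀ x, x ∈ e → x ∉ f

/-- The set `V(M)` of endpoints of a set of edges. -/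
def endpoints {V : Type*} (M : Set (Sym2 V)) : Set V := {v | ∃ e ∈ M, v ∈ e}

/-- `M` is an induced matching of `G`: a matching such that the subgraph of `G`
induced by `V(M)` has edge set exactly `M`. -/
def IsInducedMatchingSet {V : Type*} (G : SimpleGraph V) (M : Set (Sym2 V)) : Prop :=
  IsMatchingSet G M ∧ ∀ e ∈ G.edgeSet, (∀ v ∈ e, v ∈ endpoints M) → e ∈ M

/-- `P` is a prefix of the linear order `π`. -/
def IsPrefix {V : Type*} (π : LinearOrder V) (P : Set V) : Prop :=
  ∀ x ∈ P, ∀ y, π.le y x → y ∈ P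

/-- `M` crosses the linear order `π`: some prefix of `π` contains exactly one
endpoint of every edge of `M`. -/
def Crosses {V : Type*} (π : LinearOrder V) (M : Set (Sym2 V)) : Prop :=
  ∃ P : Set V, IsPrefix π P ∧ ∀ e ∈ M, ∃ x y, e = s(x, y) ∧ x ∈ P ∧ y ∉ P

/-- Linear special induced matching width: the minimum over linear orders of the
maximum size of an induced matching crossing the order. -/
noncomputable def lsimw {V : Type*} (G : SimpleGraph V) : ℕ :=
  sInf {k | ∃ π : LinearOrder V, ∀ M : Set (Sym2 V),
    IsInducedMatchingSet G M → Crosses π M → M.ncard ≤ k}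

/-- Linear maximum matching width: as `lsimw` but with arbitrary matchings. -/
noncomputable def lmmw {V : Type*} (G : SimpleGraph V) : ℕ :=
  sInf {k | ∃ π : LinearOrder V, ∀ M : Set (Sym2 V),
    IsMatchingSet G M → Crosses π M → M.ncard ≤ k}

/-- The bipartite double cover `G*`; vertex `v[1]` is `(v, false)` and `v[2]` is `(v, true)`. -/
def doubleCover {V : Type*} (G : SimpleGraph V) : SimpleGraph (V × Bool) where
  Adj a b := G.Adj a.1 b.1 ∧ a.2 ≠ b.2
  symm := ⟨fun a b h => ⟨h.1.symm, h.2.symm⟩⟩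
  loopless := ⟨fun a h => h.2 rfl⟩

/-- `M`, a matching of the double cover, neatly crosses a linear order `π` of
`V × Bool`: every edge of `M` goes from `U[1]` to `W[2]` for some `U, W ⊆ V`, and
some prefix of `π` contains all endpoints of `M` on one of the two sides and none
of the endpoints on the other side. -/
def NeatlyCrosses {V : Type*} (π : LinearOrder (V × Bool)) (M : Set (Sym2 (V × Bool))) : Prop :=
  ∃ U W : Set V,
    (∀ e ∈ M, ∃ u ∈ U, ∃ w ∈ W, e = s((u, false), (w, true))) ∧
    ∃ P : Set (V × Bool), IsPrefix π P ∧
      ((∀ v ∈ endpoints M, (v.2 = false → v ∈ P) ∧ (v.2 = true → v ∉ P)) ∨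
       (∀ v ∈ endpoints M, (v.2 = true → v ∈ P) ∧ (v.2 = false → v ∉ P)))

/-- The `n × n` grid graph. -/
def gridGraph (n : ℕ) : SimpleGraph (Fin n × Fin n) :=
  SimpleGraph.fromRel (fun p q =>
    (p.1 = q.1 ∧ (p.2 : ℕ) + 1 = (q.2 : ℕ)) ∨ (p.2 = q.2 ∧ (p.1 : ℕ) + 1 = (q.1 : ℕ)))

/-- The spanning subgraph of the `n × n` grid consisting of the horizontal edges. -/
def gridHoriz (n : ℕ) : SimpleGraph (Fin n × Fin n) :=
  SimpleGraph.fromRel (fun p q => p.1 = q.1 ∧ (p.2 : ℕ) + 1 = (q.2 : ℕ))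

/-- A clause: a set of literals, a literal being a variable with a polarity
(`true` = positive). -/
abbrev Clause (W : Type*) := Set (W × Bool)

/-- A CNF: a set of clauses. -/
abbrev CNF (W : Type*) := Set (Clause W)

/-- A total assignment satisfies a CNF. -/
def Satisfies {W : Type*} (a : W → Bool) (φ : CNF W) : Prop :=
  ∀ C ∈ φ, ∃ l ∈ C, a l.1 = l.2

/-- The set of variables occurring in a CNF. -/
def cnfVars {W : Type*} (φ : CNF W) : Set W := {x | ∃ C ∈ φ, ∃ b, (x, b) ∈ C}

/-- The CNF `φ(G)`: a positive clause `(u ∨ v)` for every edge of `G`. -/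
def phiCNF {V : Type*} (G : SimpleGraph V) : CNF V :=
  {C | ∃ e ∈ G.edgeSet, C = {l | ∃ x ∈ e, l = (x, true)}}

/-- The CNF `ψ(G)`: the positive edge clauses of the double cover `G*` together with
the two all-negative clauses `⋁ᵥ ¬v[1]` and `⋁ᵥ ¬v[2]`. -/
def psiCNF {V : Type*} (G : SimpleGraph V) : CNF (V × Bool) :=
  {C | ∃ e ∈ (doubleCover G).edgeSet, C = {l | ∃ x ∈ e, l = (x, true)}} ∪
    {{l | ∃ v : V, l = ((v, false), false)}, {l | ∃ v : V, l = ((v, true), false)}}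

/-- Make a total assignment out of a partial one (defaulting to `false` off the domain). -/
def Asg.totalize {W : Type*} (g : Asg W) : W → Bool := fun x => (g x).getD false

/-- `S(φ)|_g`: assignments `h` with domain `var(φ) \ var(g)` such that `g ∪ h` satisfies `φ`. -/
def solsRestrict {W : Type*} (φ : CNF W) (g : Asg W) : Set (Asg W) :=
  {h | h.dom = cnfVars φ \ g.dom ∧ Satisfies (Asg.totalize (Asg.union g h)) φ}

/-- A partial assignment satisfies a clause. -/
def satClausePartial {W : Type*} (g : Asg W) (C : Clause W) : Prop :=
  ∃ l ∈ C, g l.1 = some l.2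

/-- The CNF `φ[g]`: delete clauses satisfied by `g` and remove from the remaining
clauses all literals whose variable is assigned by `g`. -/
def cnfRestrictFormula {W : Type*} (φ : CNF W) (g : Asg W) : CNF W :=
  {C' | ∃ C ∈ φ, ¬ satClausePartial g C ∧ C' = {l ∈ C | l.1 ∉ g.dom}}

/-- The total satisfying assignments of a CNF, over its variable set. -/
def totalSols {W : Type*} (φ : CNF W) : Set (Asg W) :=
  {h | h.dom = cnfVars φ ∧ Satisfies (Asg.totalize h) φ}

/-- All assignments with domain `Y`. -/
def allAsgOn {W : Type*} (Y : Set W) : Set (Asg W) := {h | h.dom = Y}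

/-- Binary decision trees over variables `X`. -/
inductive DTree (X : Type*) where
  | leaf : Bool → DTree X
  | node : X → DTree X → DTree X → DTree X

namespace DTree

/-- The size (number of nodes) of a decision tree. -/
def size {X : Type*} : DTree X → ℕ
  | leaf _ => 1
  | node _ t0 t1 => 1 + t0.size + t1.size

/-- The variables occurring in a decision tree. -/
def varsOf {X : Type*} : DTree X → Set X
  | leaf _ => ∅
  | node x t0 t1 => {x} ∪ t0.varsOf ∪ t1.varsOf

/-- The read-once condition: no variable occurs twice on a root-leaf path. -/
def ReadOnce {X : Type*} : DTree X → Prop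
  | leaf _ => True
  | node x t0 t1 => x ∉ t0.varsOf ∧ x ∉ t1.varsOf ∧ t0.ReadOnce ∧ t1.ReadOnce

/-- Evaluation of a decision tree on a total assignment. -/
def eval {X : Type*} : DTree X → (X → Bool) → Bool
  | leaf b, _ => b
  | node x t0 t1, a => if a x then t1.eval a else t0.eval a

end DTree

/-- `(τ, B)` is a tree decomposition of `H`. -/
def IsTreeDecomp {V : Type u} {T : Type v} (H : SimpleGraph V) (τ : SimpleGraph T)
    (B : T → Set V) : Prop :=
  τ.IsTree ∧ (∀ e ∈ H.edgeSet, ∃ t, ∀ v ∈ e, v ∈ B t) ∧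
    (∀ v : V, (τ.induce {t | v ∈ B t}).Connected)

/-- The treewidth of a graph: minimum width over all tree decompositions. -/
noncomputable def treewidth {V : Type u} (H : SimpleGraph V) : ℕ :=
  sInf {k | ∃ (T : Type) (τ : SimpleGraph T) (B : T → Set V),
    IsTreeDecomp H τ B ∧ ∀ t, (B t).ncard ≤ k + 1}

/-- `B : Fin m → Set V` is a path decomposition of `H`. -/
def IsPathDecomp {V : Type u} (H : SimpleGraph V) (m : ℕ) (B : Fin m → Set V) : Prop :=
  (∀ e ∈ H.edgeSet, ∃ i, ∀ v ∈ e, v ∈ B i) ∧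
    (∀ v : V, (∃ i, v ∈ B i) ∧
      ∀ i j k : Fin m, i ≤ j → j ≤ k → v ∈ B i → v ∈ B k → v ∈ B j)

/-- The pathwidth of a graph: minimum width over all path decompositions. -/
noncomputable def pathwidth {V : Type u} (H : SimpleGraph V) : ℕ :=
  sInf {k | ∃ (m : ℕ) (B : Fin m → Set V), IsPathDecomp H m B ∧ ∀ i, (B i).ncard ≤ k + 1}

/-- The incidence graph of a CNF: variables on one side, clauses on the other,
a variable adjacent to exactly the clauses in which it occurs. -/
def incidenceGraph {W : Type u} (φ : CNF W) : SimpleGraph (W ⊕ {C : Clause W // C ∈ φ}) :=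
  SimpleGraph.fromRel (fun a b => ∃ (x : W) (C : {C : Clause W // C ∈ φ}),
    a = Sum.inl x ∧ b = Sum.inr C ∧ ∃ bb : Bool, (x, bb) ∈ C.1)

lemma emptyIndMatching {α : Type*} (G : SimpleGraph α) :
    IsInducedMatchingSet G (∅ : Set (Sym2 α)) := by
  refine ⟨⟨Set.empty_subset _, fun e he => he.elim⟩, ?_⟩
  intro e he hv
  induction e using Sym2.ind with
  | _ x y =>
    obtain ⟨e', he', -⟩ := hv x (Sym2.mem_mk_left _ _)
    exact he'.elim

lemma emptyCrosses {α : Type*} (σ : LinearOrder α) : Crosses σ (∅ : Set (Sym2 α)) :=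
  ⟨∅, fun x hx => hx.elim, fun e he => he.elim⟩

lemma existsBigCrossing {V : Type*} [Fintype V] (G : SimpleGraph V) (σ : LinearOrder V) :
    ∃ M : Set (Sym2 V), IsInducedMatchingSet G M ∧ Crosses σ M ∧ lsimw G ≤ M.ncard := by
  by_contra hcon
  push_neg at hcon
  have hpos : 0 < lsimw G := by
    have := hcon ∅ (emptyIndMatching G) (emptyCrosses σ)
    simpa using this
  have hmem : lsimw G - 1 ∈ {k | ∃ π : LinearOrder V, ∀ M : Set (Sym2 V),
      IsInducedMatchingSet G M → Crosses π M → M.ncard ≤ k} :=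
    ⟨σ, fun M h1 h2 => Nat.le_pred_of_lt (hcon M h1 h2)⟩
  have hle : lsimw G ≤ lsimw G - 1 := Nat.sInf_le hmem
  omega
/-- every linear order of the vertices of the bipartite double cover `G*`
is neatly crossed by an induced matching `M` of `G*` with `2|M| ≥ lsimw(G)`. -/
theorem stmt1 {V : Type*} [Fintype V] (G : SimpleGraph V) (π : LinearOrder (V × Bool)) :
    ∃ M : Set (Sym2 (V × Bool)),
      IsInducedMatchingSet (doubleCover G) M ∧ NeatlyCrosses π M ∧
        lsimw G ≤ 2 * M.ncard := by
  classical
  let f : V → V × Bool := fun v => if π.le (v, false) (v, true) then (v, false) else (v, true)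
  have hf1 : ∀ v, (f v).1 = v := by
    intro v
    by_cases h : π.le (v, false) (v, true) <;> simp [f, h]
  have hfinj : Function.Injective f := by
    intro a b h
    have h2 : (f a).1 = (f b).1 := by rw [h]
    rwa [hf1, hf1] at h2
  have hfmin : ∀ v c, π.le (f v) (v, c) := by
    intro v c
    by_cases h : π.le (v, false) (v, true)
    · cases c
      · simp only [f, if_pos h]; exact π.le_refl _
      · simp only [f, if_pos h]; exact h
    · have h' : π.le (v, true) (v, false) := (π.le_total _ _).resolve_left h
      cases c
      · simp only [f, if_neg h]; exact h'
      · simp only [f, if_neg h]; exact π.le_refl _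
  let π' : LinearOrder V := @LinearOrder.lift' V (V × Bool) π f hfinj
  have hπ' : ∀ a b, π'.le a b ↔ π.le (f a) (f b) := fun a b => Iff.rfl
  obtain ⟨M', hM'ind, ⟨P₀, hP₀pre, hP₀cross⟩, hM'card⟩ := existsBigCrossing G π'
  set Pstar : Set (V × Bool) := {z | ∃ x ∈ P₀, π.le z (f x)} with hPstarDef
  have hPstarPre : IsPrefix π Pstar := by
    rintro z ⟨x, hx, hzx⟩ w hwz
    exact ⟨x, hx, π.le_trans _ _ _ hwz hzx⟩
  have hin : ∀ x ∈ P₀, f x ∈ Pstar := fun x hx => ⟨x, hx, π.le_refl _⟩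
  have hout : ∀ y, y ∉ P₀ → ∀ c, (y, c) ∉ Pstar := by
    rintro y hy c ⟨x, hx, hle⟩
    exact hy (hP₀pre x hx y ((hπ' y x).mpr (π.le_trans _ _ _ (hfmin y c) hle)))
  have horient : ∀ x y x' y' : V, s(x, y) = s(x', y') → x ∈ P₀ → y ∉ P₀ → x' ∈ P₀ →
      y' ∉ P₀ → x = x' ∧ y = y' := by
    intro x y x' y' he hx hy hx' hy'
    rcases Sym2.eq_iff.mp he with ⟨h1, h2⟩ | ⟨h1, h2⟩
    · exact ⟨h1, h2⟩
    · exact absurd (h1 ▸ hx) hy'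
  have hshare : ∀ e ∈ M', ∀ e' ∈ M', ∀ v : V, v ∈ e → v ∈ e' → e = e' := by
    intro e he e' he' v hv hv'
    by_contra hne
    exact hM'ind.1.2 e he e' he' hne v hv hv'
  let A : Bool → Set (Sym2 V) := fun b =>
    {e | e ∈ M' ∧ ∃ x y, e = s(x, y) ∧ x ∈ P₀ ∧ y ∉ P₀ ∧ f x = (x, b)}
  have hcover : M' ⊆ A false ∪ A true := by
    intro e he
    obtain ⟨x, y, hexy, hxP, hyP⟩ := hP₀cross e he
    have hfx : f x = (x, (f x).2) := Prod.ext (hf1 x) rfl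
    cases h2 : (f x).2
    · rw [h2] at hfx
      exact Or.inl ⟨he, x, y, hexy, hxP, hyP, hfx⟩
    · rw [h2] at hfx
      exact Or.inr ⟨he, x, y, hexy, hxP, hyP, hfx⟩
  obtain ⟨b, hbcard⟩ : ∃ b : Bool, lsimw G ≤ 2 * (A b).ncard := by
    have h1 : M'.ncard ≤ (A false ∪ A true).ncard :=
      Set.ncard_le_ncard hcover (Set.toFinite _)
    have h2 : (A false ∪ A true).ncard ≤ (A false).ncard + (A true).ncard :=
      Set.ncard_union_le _ _
    by_cases h : (A false).ncard ≤ (A true).ncard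
    · exact ⟨true, by omega⟩
    · exact ⟨false, by omega⟩
  set M : Set (Sym2 (V × Bool)) :=
    {E | ∃ x y, s(x, y) ∈ M' ∧ x ∈ P₀ ∧ y ∉ P₀ ∧ f x = (x, b) ∧ E = s((x, b), (y, !b))}
    with hMdef
  refine ⟨M, ⟨⟨?_, ?_⟩, ?_⟩, ?_, ?_⟩
  · -- M ⊆ edgeSet of doubleCover
    rintro E ⟨x, y, hxy, hxP, hyP, hfx, rfl⟩
    rw [SimpleGraph.mem_edgeSet]
    exact And.intro ((SimpleGraph.mem_edgeSet G).mp (hM'ind.1.1 hxy)) (by cases b <;> simp)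
  · -- pairwise disjoint
    rintro E ⟨x, y, hxy, hxP, hyP, hfx, rfl⟩ E' ⟨x', y', hxy', hxP', hyP', hfx', rfl⟩ hne v hv hv'
    rw [Sym2.mem_iff] at hv hv'
    apply hne
    rcases hv with rfl | rfl <;> rcases hv' with h | h
    · obtain rfl : x = x' := congrArg Prod.fst h
      have heq := hshare _ hxy _ hxy' x (Sym2.mem_mk_left _ _) (Sym2.mem_mk_left _ _)
      obtain ⟨-, rfl⟩ := horient x y x y' heq hxP hyP hxP' hyP'
      rfl
    · have hb := congrArg Prod.snd h
      simp at hb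
    · have hb := congrArg Prod.snd h
      simp at hb
    · obtain rfl : y = y' := congrArg Prod.fst h
      have heq := hshare _ hxy _ hxy' y (Sym2.mem_mk_right _ _) (Sym2.mem_mk_right _ _)
      obtain ⟨rfl, -⟩ := horient x y x' y heq hxP hyP hxP' hyP'
      rfl
  · -- induced
    intro E hE hVE
    revert hE hVE
    induction E using Sym2.ind with
    | _ z w =>
      intro hE hVE
      rw [SimpleGraph.mem_edgeSet] at hE
      have hadj : G.Adj z.1 w.1 := (hE : G.Adj z.1 w.1 ∧ z.2 ≠ w.2).1
      have hzw : z.2 ≠ w.2 := (hE : G.Adj z.1 w.1 ∧ z.2 ≠ w.2).2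
      obtain ⟨E1, ⟨x1, y1, hxy1, hx1P, hy1P, hfx1, rfl⟩, hz⟩ := hVE z (Sym2.mem_mk_left _ _)
      obtain ⟨E2, ⟨x2, y2, hxy2, hx2P, hy2P, hfx2, rfl⟩, hw⟩ := hVE w (Sym2.mem_mk_right _ _)
      rw [Sym2.mem_iff] at hz hw
      have hep : ∀ u : V, (∃ e ∈ M', u ∈ e) → u ∈ endpoints M' := fun u hu => hu
      rcases hz with rfl | rfl <;> rcases hw with rfl | rfl
      · exact absurd rfl hzw
      · -- z = (x1,b), w = (y2,!b)
        have hmem : s(x1, y2) ∈ M' := by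
          apply hM'ind.2 _ ((SimpleGraph.mem_edgeSet G).mpr hadj)
          intro u hu
          rw [Sym2.mem_iff] at hu
          rcases hu with h | h
          · rw [h]; exact ⟨s(x1, y1), hxy1, Sym2.mem_mk_left _ _⟩
          · rw [h]; exact ⟨s(x2, y2), hxy2, Sym2.mem_mk_right _ _⟩
        exact ⟨x1, y2, hmem, hx1P, hy2P, hfx1, rfl⟩
      · -- z = (y1,!b), w = (x2,b)
        have hmem : s(x2, y1) ∈ M' := by
          apply hM'ind.2 _ ((SimpleGraph.mem_edgeSet G).mpr hadj.symm)
          intro u hu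
          rw [Sym2.mem_iff] at hu
          rcases hu with h | h
          · rw [h]; exact ⟨s(x2, y2), hxy2, Sym2.mem_mk_left _ _⟩
          · rw [h]; exact ⟨s(x1, y1), hxy1, Sym2.mem_mk_right _ _⟩
        exact ⟨x2, y1, hmem, hx2P, hy1P, hfx2, Sym2.eq_swap⟩
      · exact absurd rfl hzw
  · -- NeatlyCrosses
    refine ⟨Set.univ, Set.univ, ?_, Pstar, hPstarPre, ?_⟩
    · rintro E ⟨x, y, hxy, hxP, hyP, hfx, rfl⟩
      cases b
      · exact ⟨x, trivial, y, trivial, rfl⟩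
      · exact ⟨y, trivial, x, trivial, Sym2.eq_swap⟩
    · have hkey : ∀ v ∈ endpoints M, (v.2 = b → v ∈ Pstar) ∧ (v.2 = !b → v ∉ Pstar) := by
        rintro v ⟨E, ⟨x, y, hxy, hxP, hyP, hfx, rfl⟩, hv⟩
        rw [Sym2.mem_iff] at hv
        rcases hv with rfl | rfl
        · refine ⟨fun _ => ?_, fun hb => ?_⟩
          · have := hin x hxP; rwa [hfx] at this
          · exact absurd hb (by cases b <;> simp)
        · refine ⟨fun hb => ?_, fun _ => hout y hyP _⟩
          · exact absurd hb (by cases b <;> simp)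
      rcases Bool.eq_false_or_eq_true b with hb | hb
      · rw [hb] at hkey
        refine Or.inr fun v hv => ⟨(hkey v hv).1, fun h => (hkey v hv).2 ?_⟩
        rw [h]; rfl
      · rw [hb] at hkey
        refine Or.inl fun v hv => ⟨(hkey v hv).1, fun h => (hkey v hv).2 ?_⟩
        rw [h]; rfl
  · -- cardinality
    have hsub : A b ⊆ Sym2.map Prod.fst '' M := by
      rintro e ⟨heM', x, y, rfl, hxP, hyP, hfx⟩
      exact ⟨s((x, b), (y, !b)), ⟨x, y, heM', hxP, hyP, hfx, rfl⟩, by rw [Sym2.map_pair_eq]⟩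
    have h1 : (A b).ncard ≤ (Sym2.map Prod.fst '' M).ncard :=
      Set.ncard_le_ncard hsub (Set.toFinite _)
    have h2 : (Sym2.map Prod.fst '' M).ncard ≤ M.ncard := Set.ncard_image_le (Set.toFinite _)
    omega
end

section
/- Let G be a finite simple graph without isolated vertices and let E₁, E₂ be a partition of E(G) such that the spanning subgraphs G[E₁] = (V(G),E₁) and G[E₂] = (V(G),E₂) have no isolated vertices. Then for every linear order π of V(G), at least one of G[E₁], G[E₂] has an induced matching M crossing π with 2·|M| ≥ lsimw(G). -/
/-- if `E₁, E₂` partition `E(G)` with both spanning subgraphs having no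
isolated vertices, then every linear order `π` of `V(G)` is crossed by an induced
matching `M` of `G[E₁]` or of `G[E₂]` with `2|M| ≥ lsimw(G)`. -/
theorem stmt2 {V : Type*} [Fintype V] (G : SimpleGraph V)
    (hiso : ∀ v : V, ∃ u, G.Adj v u)
    (E₁ E₂ : Set (Sym2 V)) (hU : E₁ ∪ E₂ = G.edgeSet) (hI : E₁ ∩ E₂ = ∅)
    (h1 : ∀ v : V, ∃ e ∈ E₁, v ∈ e) (h2 : ∀ v : V, ∃ e ∈ E₂, v ∈ e)
    (π : LinearOrder V) :
    ∃ M : Set (Sym2 V),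
      ((IsInducedMatchingSet (SimpleGraph.fromEdgeSet E₁) M ∨
          IsInducedMatchingSet (SimpleGraph.fromEdgeSet E₂) M) ∧ Crosses π M) ∧
        lsimw G ≤ 2 * M.ncard := by
  classical
  set S : Set (Set (Sym2 V)) := {M | IsInducedMatchingSet G M ∧ Crosses π M} with hS
  have hne : (∅ : Set (Sym2 V)) ∈ S := by
    refine ⟨⟨⟨fun e he => he.elim, fun e he => he.elim⟩, ?_⟩, ⟨∅, fun x hx => hx.elim,
      fun e he => he.elim⟩⟩
    intro e he hv
    exfalso
    induction e using Sym2.ind with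
    | _ x y =>
      obtain ⟨f, hf, _⟩ := hv x (Sym2.mem_mk_left x y)
      exact hf
  obtain ⟨M₀, hM₀S, hmax⟩ :=
    Set.Finite.exists_maximalFor (fun M => M.ncard) S (Set.toFinite S) ⟨∅, hne⟩
  have hle : ∀ M ∈ S, M.ncard ≤ M₀.ncard := by
    intro M hM
    by_contra h
    have : M.ncard ≤ M₀.ncard := hmax hM (le_of_lt (lt_of_not_ge h))
    omega
  have hlsimw : lsimw G ≤ M₀.ncard :=
    Nat.sInf_le ⟨π, fun M hm hc => hle M ⟨hm, hc⟩⟩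
  have hM₀G : M₀ ⊆ G.edgeSet := hM₀S.1.1.1
  have key : ∀ E : Set (Sym2 V), E ⊆ G.edgeSet →
      IsInducedMatchingSet (SimpleGraph.fromEdgeSet E) (M₀ ∩ E) := by
    intro E hE
    constructor
    · constructor
      · intro e he
        rw [SimpleGraph.edgeSet_fromEdgeSet]
        exact ⟨he.2, G.not_isDiag_of_mem_edgeSet (hE he.2)⟩
      · intro e he f hf hnef x hx
        exact hM₀S.1.1.2 e he.1 f hf.1 hnef x hx
    · intro e he hv
      rw [SimpleGraph.edgeSet_fromEdgeSet] at he
      have heM₀ : e ∈ M₀ := by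
        refine hM₀S.1.2 e (hE he.1) (fun v hv' => ?_)
        obtain ⟨f, hf, hvf⟩ := hv v hv'
        exact ⟨f, hf.1, hvf⟩
      exact ⟨heM₀, he.1⟩
  have hcross : ∀ E : Set (Sym2 V), Crosses π (M₀ ∩ E) := by
    intro E
    obtain ⟨P, hP, hc⟩ := hM₀S.2
    exact ⟨P, hP, fun e he => hc e he.1⟩
  have hE₁ : E₁ ⊆ G.edgeSet := hU ▸ Set.subset_union_left
  have hE₂ : E₂ ⊆ G.edgeSet := hU ▸ Set.subset_union_right
  have hcover : M₀ ⊆ (M₀ ∩ E₁) ∪ (M₀ ∩ E₂) := by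
    intro e he
    have : e ∈ E₁ ∪ E₂ := hU ▸ hM₀G he
    rcases this with h | h
    · exact Or.inl ⟨he, h⟩
    · exact Or.inr ⟨he, h⟩
  have hcard : M₀.ncard ≤ (M₀ ∩ E₁).ncard + (M₀ ∩ E₂).ncard :=
    le_trans (Set.ncard_le_ncard hcover (Set.toFinite _)) (Set.ncard_union_le _ _)
  rcases le_total ((M₀ ∩ E₁).ncard) ((M₀ ∩ E₂).ncard) with h | h
  · exact ⟨M₀ ∩ E₂, ⟨Or.inr (key E₂ hE₂), hcross E₂⟩, by omega⟩
  · exact ⟨M₀ ∩ E₁, ⟨Or.inl (key E₁ hE₁), hcross E₁⟩, by omega⟩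
end

section
/- Let G be a finite simple graph without isolated vertices and let E₁, E₂ be a partition of E(G) such that the spanning subgraphs G[E₁] = (V(G),E₁) and G[E₂] = (V(G),E₂) have no isolated vertices. Then for every linear order π* of the vertices of the bipartite double cover G* (note that G*, G[E₁]* and G[E₂]* all have the same vertex set), at least one of G[E₁]*, G[E₂]* has an induced matching M neatly crossing π* with 4·|M| ≥ lsimw(G). -/
lemma lift_lemma {V : Type*} (G : SimpleGraph V) (E : Set (Sym2 V)) (hE : E ⊆ G.edgeSet)
    (π : LinearOrder (V × Bool)) (σ : V → V × Bool) (hσ1 : ∀ v, (σ v).1 = v)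
    (hσmin : ∀ v c, π.le (σ v) (v, c))
    (M₀ : Set (Sym2 V)) (hM₀ : IsInducedMatchingSet G M₀)
    (xf yf : Sym2 V → V)
    (hexy : ∀ e ∈ M₀, e = s(xf e, yf e))
    (hsep : ∀ e ∈ M₀, ∀ f ∈ M₀, π.lt (σ (xf e)) (σ (yf f)))
    (b : Bool) (M' : Set (Sym2 V)) (hsub : M' ⊆ M₀) (hsubE : M' ⊆ E)
    (hb : ∀ e ∈ M', (σ (xf e)).2 = b) :
    ∃ M : Set (Sym2 (V × Bool)),
      IsInducedMatchingSet (doubleCover (SimpleGraph.fromEdgeSet E)) M ∧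
      NeatlyCrosses π M ∧ M.ncard = M'.ncard := by
  classical
  letI : LinearOrder (V × Bool) := π
  set L : Sym2 V → Sym2 (V × Bool) := fun e => s((xf e, b), (yf e, !b)) with hL
  -- basic facts
  have hxne : ∀ e ∈ M₀, ∀ f ∈ M₀, xf e ≠ yf f := by
    intro e he f hf h
    have := hsep e he f hf
    rw [h] at this
    exact absurd this (lt_irrefl _)
  have hxmem : ∀ e ∈ M₀, xf e ∈ e ∧ yf e ∈ e := by
    intro e he
    have h1 : xf e ∈ s(xf e, yf e) := Sym2.mem_mk_left _ _
    have h2 : yf e ∈ s(xf e, yf e) := Sym2.mem_mk_right _ _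
    rw [← hexy e he] at h1 h2
    exact ⟨h1, h2⟩
  have hdisj : ∀ e ∈ M₀, ∀ f ∈ M₀, ∀ v, v ∈ e → v ∈ f → e = f := by
    intro e he f hf v hv1 hv2
    by_contra hne
    exact hM₀.1.2 e he f hf hne v hv1 hv2
  have hmemL : ∀ e, ∀ z ∈ L e, z = (xf e, b) ∨ z = (yf e, !b) := by
    intro e z hz
    simpa [hL] using hz
  have key : ∀ z ∈ endpoints (L '' M'), ∃ e ∈ M', z = (xf e, b) ∨ z = (yf e, !b) := by
    rintro z ⟨g', ⟨e, he, rfl⟩, hz⟩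
    exact ⟨e, he, hmemL e z hz⟩
  have hσx : ∀ e ∈ M', σ (xf e) = (xf e, b) := by
    intro e he
    exact Prod.ext (hσ1 _) (hb e he)
  refine ⟨L '' M', ⟨⟨?_, ?_⟩, ?_⟩, ?_, ?_⟩
  · -- edges
    rintro g ⟨e, he, rfl⟩
    show L e ∈ _
    rw [hL]
    rw [SimpleGraph.mem_edgeSet]
    refine ⟨?_, by simp⟩
    show (SimpleGraph.fromEdgeSet E).Adj (xf e) (yf e)
    rw [SimpleGraph.fromEdgeSet_adj]
    refine ⟨?_, hxne e (hsub he) e (hsub he)⟩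
    rw [← hexy e (hsub he)]
    exact hsubE he
  · -- matching
    rintro g ⟨e, he, rfl⟩ g' ⟨f, hf, rfl⟩ hne z hz hz'
    have hef : e ≠ f := by rintro rfl; exact hne rfl
    have hz1 : z.1 ∈ e := by
      rcases hmemL e z hz with rfl | rfl
      · exact (hxmem e (hsub he)).1
      · exact (hxmem e (hsub he)).2
    have hz2 : z.1 ∈ f := by
      rcases hmemL f z hz' with rfl | rfl
      · exact (hxmem f (hsub hf)).1
      · exact (hxmem f (hsub hf)).2
    exact hef (hdisj e (hsub he) f (hsub hf) z.1 hz1 hz2)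
  · -- induced
    intro g hg hgend
    induction g using Sym2.ind with
    | _ p q =>
    obtain ⟨h1, h2⟩ := (SimpleGraph.mem_edgeSet _).mp hg
    have hpq : s(p.1, q.1) ∈ E ∧ p.1 ≠ q.1 := (SimpleGraph.fromEdgeSet_adj E).mp h1
    obtain ⟨e, he, hpe⟩ := key p (hgend p (Sym2.mem_mk_left _ _))
    obtain ⟨f, hf, hqf⟩ := key q (hgend q (Sym2.mem_mk_right _ _))
    have hp1 : p.1 ∈ e := by
      rcases hpe with rfl | rfl
      · exact (hxmem e (hsub he)).1
      · exact (hxmem e (hsub he)).2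
    have hq1 : q.1 ∈ f := by
      rcases hqf with rfl | rfl
      · exact (hxmem f (hsub hf)).1
      · exact (hxmem f (hsub hf)).2
    have hin : s(p.1, q.1) ∈ M₀ := by
      apply hM₀.2 _ (hE hpq.1)
      intro v hv
      rcases Sym2.mem_iff.mp hv with rfl | rfl
      · exact ⟨e, hsub he, hp1⟩
      · exact ⟨f, hsub hf, hq1⟩
    have he2 : e = s(p.1, q.1) :=
      hdisj e (hsub he) _ hin p.1 hp1 (Sym2.mem_mk_left _ _)
    have hf2 : f = s(p.1, q.1) :=
      hdisj f (hsub hf) _ hin q.1 hq1 (Sym2.mem_mk_right _ _)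
    have hef : e = f := he2.trans hf2.symm
    subst hef
    have hmain := Sym2.eq_iff.mp (he2.symm.trans (hexy e (hsub he)))
    have goal_eq : s(p, q) = L e := by
      rcases hmain with ⟨ha, hb'⟩ | ⟨ha, hb'⟩
      · have hp' : p = (xf e, b) := by
          rcases hpe with h | h
          · exact h
          · exfalso; rw [h] at ha; exact hxne e (hsub he) e (hsub he) ha.symm
        have hq' : q = (yf e, !b) := by
          rcases hqf with h | h
          · exfalso; rw [h] at hb'; exact hxne e (hsub he) e (hsub he) hb'
          · exact h
        rw [hp', hq']
      · have hp' : p = (yf e, !b) := by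
          rcases hpe with h | h
          · exfalso; rw [h] at ha; exact hxne e (hsub he) e (hsub he) ha
          · exact h
        have hq' : q = (xf e, b) := by
          rcases hqf with h | h
          · exact h
          · exfalso; rw [h] at hb'; exact hxne e (hsub he) e (hsub he) hb'.symm
        rw [hp', hq']
        exact Sym2.eq_swap
    exact goal_eq ▸ ⟨e, he, rfl⟩
  · -- neatly crosses
    refine ⟨(cond b yf xf) '' M', (cond b xf yf) '' M', ?_,
      {z | ∀ e ∈ M', π.lt z (σ (yf e))}, ?_, ?_⟩
    · rintro g ⟨e, he, rfl⟩
      cases b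
      · exact ⟨xf e, ⟨e, he, rfl⟩, yf e, ⟨e, he, rfl⟩, rfl⟩
      · exact ⟨yf e, ⟨e, he, rfl⟩, xf e, ⟨e, he, rfl⟩, Sym2.eq_swap⟩
    · intro z hz w hw e he
      exact lt_of_le_of_lt hw (hz e he)
    · have hinP : ∀ e ∈ M', (xf e, b) ∈ {z | ∀ f ∈ M', π.lt z (σ (yf f))} := by
        intro e he f hf
        rw [← hσx e he]
        exact hsep e (hsub he) f (hsub hf)
      have houtP : ∀ e ∈ M', ∀ c, ((yf e : V), (c : Bool)) ∉ {z | ∀ f ∈ M', π.lt z (σ (yf f))} := by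
        intro e he c hP
        exact absurd (lt_of_le_of_lt (hσmin (yf e) c) (hP e he)) (lt_irrefl _)
      cases b
      · left
        intro v hv
        obtain ⟨e, he, h⟩ := key v hv
        rcases h with rfl | rfl
        · exact ⟨fun _ => hinP e he, fun h => by simp at h⟩
        · exact ⟨fun h => by simp at h, fun _ => houtP e he true⟩
      · right
        intro v hv
        obtain ⟨e, he, h⟩ := key v hv
        rcases h with rfl | rfl
        · exact ⟨fun _ => hinP e he, fun h => by simp at h⟩
        · exact ⟨fun h => by simp at h, fun _ => houtP e he false⟩
  · -- ncard
    apply Set.ncard_image_of_injOn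
    intro e he f hf h
    have h' : s(((xf e : V), (b : Bool)), (yf e, !b)) = s((xf f, b), (yf f, !b)) := h
    rw [Sym2.eq_iff] at h'
    rcases h' with ⟨h1, h2⟩ | ⟨h1, h2⟩
    · have hx : xf e = xf f := (Prod.ext_iff.mp h1).1
      have hy : yf e = yf f := (Prod.ext_iff.mp h2).1
      rw [hexy e (hsub he), hx, hy, ← hexy f (hsub hf)]
    · have hbb : b = !b := (Prod.ext_iff.mp h1).2
      simp at hbb

/-- if `E₁, E₂` partition `E(G)` with both spanning subgraphs having no
isolated vertices, then every linear order `π*` of `V(G*)` is neatly crossed by an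
induced matching `M` of `G[E₁]*` or of `G[E₂]*` with `4|M| ≥ lsimw(G)`. -/
theorem stmt3 {V : Type*} [Fintype V] (G : SimpleGraph V)
    (hiso : ∀ v : V, ∃ u, G.Adj v u)
    (E₁ E₂ : Set (Sym2 V)) (hU : E₁ ∪ E₂ = G.edgeSet) (hI : E₁ ∩ E₂ = ∅)
    (h1 : ∀ v : V, ∃ e ∈ E₁, v ∈ e) (h2 : ∀ v : V, ∃ e ∈ E₂, v ∈ e)
    (π : LinearOrder (V × Bool)) :
    ∃ M : Set (Sym2 (V × Bool)),
      ((IsInducedMatchingSet (doubleCover (SimpleGraph.fromEdgeSet E₁)) M ∧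
          NeatlyCrosses π M) ∨
        (IsInducedMatchingSet (doubleCover (SimpleGraph.fromEdgeSet E₂)) M ∧
          NeatlyCrosses π M)) ∧
        lsimw G ≤ 4 * M.ncard := by
  classical
  haveI : Finite (Sym2 V) :=
    Finite.of_surjective (fun p : V × V => s(p.1, p.2))
      (fun z => Sym2.ind (fun x y => ⟨(x, y), rfl⟩) z)
  set σ : V → V × Bool := fun v => if π.le (v, false) (v, true) then (v, false) else (v, true)
    with hσ
  have hσ1 : ∀ v, (σ v).1 = v := by
    intro v
    simp only [hσ]
    split <;> rfl
  have hσmin : ∀ v c, π.le (σ v) (v, c) := by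
    intro v c
    letI := π
    simp only [hσ]
    by_cases h : π.le (v, false) (v, true)
    · rw [if_pos h]
      cases c
      · exact le_refl _
      · exact h
    · rw [if_neg h]
      cases c
      · exact (not_le.mp h).le
      · exact le_refl _
  have hσinj : Function.Injective σ := by
    intro a b h
    have := congrArg Prod.fst h
    rwa [hσ1, hσ1] at this
  letI πV : LinearOrder V := letI := π; LinearOrder.lift' σ hσinj
  have hπV : ∀ a b : V, πV.le a b ↔ π.le (σ a) (σ b) := fun _ _ => Iff.rfl
  set S : Set ℕ :=
    {n | ∃ M : Set (Sym2 V), IsInducedMatchingSet G M ∧ Crosses πV M ∧ M.ncard = n} with hS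
  have hempty_ind : IsInducedMatchingSet G ∅ := by
    refine ⟨⟨Set.empty_subset _, fun e he => absurd he (Set.notMem_empty e)⟩, ?_⟩
    intro e he hend
    exfalso
    induction e using Sym2.ind with
    | _ x y => exact absurd (hend x (Sym2.mem_mk_left _ _)) (by simp [endpoints])
  have hS0 : (0 : ℕ) ∈ S :=
    ⟨∅, hempty_ind,
      ⟨∅, fun x hx => absurd hx (Set.notMem_empty _),
        fun e he => absurd he (Set.notMem_empty _)⟩, Set.ncard_empty _⟩
  have hSbdd : BddAbove S := by
    refine ⟨(Set.univ : Set (Sym2 V)).ncard, ?_⟩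
    rintro n ⟨M, _, _, rfl⟩
    exact Set.ncard_le_ncard (Set.subset_univ M) Set.finite_univ
  have hmem : sSup S ∈ S := Nat.sSup_mem ⟨0, hS0⟩ hSbdd
  obtain ⟨M₀, hM₀, hcrM₀, hcard⟩ := hmem
  have hlsimw : lsimw G ≤ sSup S := by
    unfold lsimw
    exact Nat.sInf_le ⟨πV, fun M hind hcr => le_csSup hSbdd ⟨M, hind, hcr, rfl⟩⟩
  obtain ⟨P₀, hpre, hcr⟩ := hcrM₀
  have hcr' : ∀ e : Sym2 V, ∃ x y, e ∈ M₀ → e = s(x, y) ∧ x ∈ P₀ ∧ y ∉ P₀ := by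
    intro e
    by_cases h : e ∈ M₀
    · obtain ⟨x, y, h1, h2, h3⟩ := hcr e h
      exact ⟨x, y, fun _ => ⟨h1, h2, h3⟩⟩
    · induction e using Sym2.ind with
      | _ x y => exact ⟨x, y, fun h' => absurd h' h⟩
  choose xf yf hxy using hcr'
  have hexy : ∀ e ∈ M₀, e = s(xf e, yf e) := fun e he => (hxy e he).1
  have hsep : ∀ e ∈ M₀, ∀ f ∈ M₀, π.lt (σ (xf e)) (σ (yf f)) := by
    intro e he f hf
    have hx := (hxy e he).2.1
    have hy := (hxy f hf).2.2
    letI := π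
    rw [← not_le]
    intro hle
    exact hy (hpre _ hx _ ((hπV _ _).mpr hle))
  have hcover : ∀ e ∈ M₀, e ∈ E₁ ∨ e ∈ E₂ := by
    intro e he
    have h := hM₀.1.1 he
    rw [← hU] at h
    exact h
  set A : Bool → Bool → Set (Sym2 V) :=
    fun i b => {e | e ∈ M₀ ∧ e ∈ (cond i E₁ E₂) ∧ (σ (xf e)).2 = b} with hA
  have hAsub : ∀ i b, A i b ⊆ M₀ := fun i b e he => he.1
  have hAsubE : ∀ i b, A i b ⊆ cond i E₁ E₂ := fun i b e he => he.2.1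
  have hAb : ∀ i b, ∀ e ∈ A i b, (σ (xf e)).2 = b := fun i b e he => he.2.2
  have hcov : M₀ ⊆ A true false ∪ A true true ∪ A false false ∪ A false true := by
    intro e he
    rcases hcover e he with h | h
    · cases hb : (σ (xf e)).2
      · exact Or.inl (Or.inl (Or.inl ⟨he, h, hb⟩))
      · exact Or.inl (Or.inl (Or.inr ⟨he, h, hb⟩))
    · cases hb : (σ (xf e)).2
      · exact Or.inl (Or.inr ⟨he, h, hb⟩)
      · exact Or.inr ⟨he, h, hb⟩
  have hsum : M₀.ncard ≤ (A true false).ncard + (A true true).ncard +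
      (A false false).ncard + (A false true).ncard := by
    have u1 := Set.ncard_le_ncard hcov (Set.toFinite _)
    have u2 := Set.ncard_union_le (A true false ∪ A true true ∪ A false false) (A false true)
    have u3 := Set.ncard_union_le (A true false ∪ A true true) (A false false)
    have u4 := Set.ncard_union_le (A true false) (A true true)
    omega
  have hE1 : E₁ ⊆ G.edgeSet := by rw [← hU]; exact Set.subset_union_left
  have hE2 : E₂ ⊆ G.edgeSet := by rw [← hU]; exact Set.subset_union_right
  have hpick : sSup S ≤ 4 * (A true false).ncard ∨ sSup S ≤ 4 * (A true true).ncard ∨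
      sSup S ≤ 4 * (A false false).ncard ∨ sSup S ≤ 4 * (A false true).ncard := by
    omega
  rcases hpick with h | h | h | h
  · obtain ⟨M, hind, hnc, hncard⟩ := lift_lemma G E₁ hE1 π σ hσ1 hσmin M₀ hM₀ xf yf hexy hsep
      false (A true false) (hAsub _ _) (hAsubE _ _) (hAb _ _)
    exact ⟨M, Or.inl ⟨hind, hnc⟩, by rw [hncard]; exact hlsimw.trans h⟩
  · obtain ⟨M, hind, hnc, hncard⟩ := lift_lemma G E₁ hE1 π σ hσ1 hσmin M₀ hM₀ xf yf hexy hsep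
      true (A true true) (hAsub _ _) (hAsubE _ _) (hAb _ _)
    exact ⟨M, Or.inl ⟨hind, hnc⟩, by rw [hncard]; exact hlsimw.trans h⟩
  · obtain ⟨M, hind, hnc, hncard⟩ := lift_lemma G E₂ hE2 π σ hσ1 hσmin M₀ hM₀ xf yf hexy hsep
      false (A false false) (hAsub _ _) (hAsubE _ _) (hAb _ _)
    exact ⟨M, Or.inr ⟨hind, hnc⟩, by rw [hncard]; exact hlsimw.trans h⟩
  · obtain ⟨M, hind, hnc, hncard⟩ := lift_lemma G E₂ hE2 π σ hσ1 hσmin M₀ hM₀ xf yf hexy hsep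
      true (A false true) (hAsub _ _) (hAsubE _ _) (hAb _ _)
    exact ⟨M, Or.inr ⟨hind, hnc⟩, by rw [hncard]; exact hlsimw.trans h⟩
end

section
/- Let G be a finite simple graph without isolated vertices and let M = {{u₁[1],w₁[2]},…,{u_q[1],w_q[2]}} be an induced matching of the bipartite double cover G* (with u₁,…,u_q pairwise distinct and w₁,…,w_q pairwise distinct vertices of G). Let Z be a nonempty subset of {u₁[1],…,u_q[1]}, let I = {i : u_i[1] ∉ Z}, and let J ⊆ I. Let a be the total assignment on V(G*) defined by a(x) = 0 if x ∈ Z ∪ {w_j[2] : j ∈ J} and a(x) = 1 otherwise. Then a satisfies ψ(G) if and only if J ≠ ∅. -/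
/-- with `M = {{uᵢ[1], wᵢ[2]}}` an induced matching of `G*`, `Z` a nonempty
subset of `{uᵢ[1]}`, `J ⊆ I = {i : uᵢ[1] ∉ Z}`, the total assignment sending exactly
`Z ∪ {wⱼ[2] : j ∈ J}` to `0` satisfies `ψ(G)` iff `J ≠ ∅`. -/
theorem stmt5 {V : Type*} [Fintype V] (G : SimpleGraph V)
    (hiso : ∀ v : V, ∃ u, G.Adj v u)
    (q : ℕ) (u w : Fin q → V)
    (hu : Function.Injective u) (hw : Function.Injective w)
    (M : Set (Sym2 (V × Bool)))
    (hM : M = {e | ∃ i : Fin q, e = s((u i, false), (w i, true))})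
    (hMind : IsInducedMatchingSet (doubleCover G) M)
    (Z : Set (V × Bool)) (hZsub : Z ⊆ {x | ∃ i : Fin q, x = (u i, false)})
    (hZne : Z.Nonempty)
    (J : Set (Fin q)) (hJ : ∀ j ∈ J, (u j, false) ∉ Z)
    (a : V × Bool → Bool)
    (ha : ∀ x, a x = false ↔ (x ∈ Z ∨ ∃ j ∈ J, x = (w j, true))) :
    Satisfies a (psiCNF G) ↔ J.Nonempty := by
  subst hM
  constructor
  · intro hsat
    have hC : {l | ∃ v : V, l = ((v, true), false)} ∈ psiCNF G :=
      Set.mem_union_right _ (Set.mem_insert_of_mem _ rfl)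
    obtain ⟨l, hl, hal⟩ := hsat _ hC
    obtain ⟨v, rfl⟩ := hl
    rcases (ha _).1 hal with h | ⟨j, hj, _⟩
    · obtain ⟨i, hi⟩ := hZsub h
      simp at hi
    · exact ⟨j, hj⟩
  · rintro ⟨j, hj⟩ C hC
    have key : ∀ (i j' : Fin q), (u i, false) ∈ Z → j' ∈ J → G.Adj (u i) (w j') → False := by
      intro i j' hZi hj' hadj
      have hedge : s(((u i : V), false), ((w j' : V), true)) ∈ (doubleCover G).edgeSet := by
        rw [SimpleGraph.mem_edgeSet]
        exact ⟨hadj, by simp⟩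
      have hmem : s(((u i : V), false), ((w j' : V), true)) ∈
          {e | ∃ i : Fin q, e = s(((u i : V), false), ((w i : V), true))} := by
        apply hMind.2 _ hedge
        intro v hv
        rcases Sym2.mem_iff.1 hv with rfl | rfl
        · exact ⟨s(((u i : V), false), ((w i : V), true)), ⟨i, rfl⟩, Sym2.mem_mk_left _ _⟩
        · exact ⟨s(((u j' : V), false), ((w j' : V), true)), ⟨j', rfl⟩, Sym2.mem_mk_right _ _⟩
      obtain ⟨k, hk⟩ := hmem
      rcases Sym2.eq_iff.1 hk with ⟨h1, h2⟩ | ⟨h1, h2⟩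
      · have hik : i = k := hu (congrArg Prod.fst h1)
        have hjk : j' = k := hw (congrArg Prod.fst h2)
        exact hJ j' hj' (hjk ▸ hik ▸ hZi)
      · exact absurd (congrArg Prod.snd h1) (by simp)
    rcases hC with ⟨e, he, rfl⟩ | hC
    · induction e using Sym2.inductionOn with
      | hf p r =>
        rw [SimpleGraph.mem_edgeSet] at he
        by_contra hno
        push_neg at hno
        have hp : a p = false := by
          have := hno (p, true) ⟨p, Sym2.mem_mk_left _ _, rfl⟩
          simpa using this
        have hr : a r = false := by
          have := hno (r, true) ⟨r, Sym2.mem_mk_right _ _, rfl⟩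
          simpa using this
        rcases (ha p).1 hp with hpZ | ⟨j1, hj1, hp1⟩
        · obtain ⟨i, hpu⟩ := hZsub hpZ
          rcases (ha r).1 hr with hrZ | ⟨j2, hj2, hr2⟩
          · obtain ⟨i2, hru⟩ := hZsub hrZ
            exact he.2 (by rw [hpu, hru])
          · subst hpu; subst hr2
            exact key i j2 hpZ hj2 he.1
        · rcases (ha r).1 hr with hrZ | ⟨j2, hj2, hr2⟩
          · obtain ⟨i, hru⟩ := hZsub hrZ
            subst hp1; subst hru
            exact key i j1 hrZ hj1 he.1.symm
          · subst hp1; subst hr2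
            exact he.2 rfl
    · rcases hC with rfl | hC
      · obtain ⟨z, hz⟩ := hZne
        obtain ⟨i, rfl⟩ := hZsub hz
        exact ⟨((u i, false), false), ⟨u i, rfl⟩, (ha _).2 (Or.inl hz)⟩
      · rw [Set.mem_singleton_iff] at hC
        subst hC
        exact ⟨((w j, true), false), ⟨w j, rfl⟩, (ha _).2 (Or.inr ⟨j, hj, rfl⟩)⟩
end

section
/- Let G be a finite simple graph without isolated vertices and let M = {{u_i[1],w_i[2]} : 1 ≤ i ≤ q} be an induced matching of the bipartite double cover G* (with u₁,…,u_q pairwise distinct and w₁,…,w_q pairwise distinct). Let D ⊆ V(G*) satisfy {u₁[1],…,u_q[1]} ⊆ D and D ∩ {w₁[2],…,w_q[2]} = ∅, and let g be an assignment with domain D such that g(x) = 1 for all x ∈ D \ {u₁[1],…,u_q[1]}, g(u_i[1]) = 0 for at least one index i, and g(u_i[1]) = 1 for at least two indices i. Let I(g) = {i : g(u_i[1]) = 1}. Then the uniform set S(ψ(G))|_g is not a rectangle that breaks the set {w_i[2] : i ∈ I(g)}. -/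
/-- with `M = {{uᵢ[1], wᵢ[2]}}` an induced matching of `G*` and `g` a
fooling assignment on domain `D` (all of `uᵢ[1]` in `D`, no `wᵢ[2]` in `D`, everything
outside `{uᵢ[1]}` set to `1`, at least one `uᵢ[1]` set to `0` and at least two set to
`1`), the uniform set `S(ψ(G))|_g` is not a rectangle breaking `{wᵢ[2] : i ∈ I(g)}`. -/
theorem stmt6 {V : Type*} [Fintype V] (G : SimpleGraph V)
    (hiso : ∀ v : V, ∃ u, G.Adj v u)
    (q : ℕ) (u w : Fin q → V)
    (hu : Function.Injective u) (hw : Function.Injective w)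
    (M : Set (Sym2 (V × Bool)))
    (hM : M = {e | ∃ i : Fin q, e = s((u i, false), (w i, true))})
    (hMind : IsInducedMatchingSet (doubleCover G) M)
    (D : Set (V × Bool))
    (hD1 : ∀ i : Fin q, (u i, false) ∈ D)
    (hD2 : ∀ i : Fin q, (w i, true) ∉ D)
    (g : Asg (V × Bool)) (hgdom : g.dom = D)
    (hg1 : ∀ x ∈ D, (∀ i : Fin q, x ≠ (u i, false)) → g x = some true)
    (hg0 : ∃ i : Fin q, g (u i, false) = some false)
    (hg2 : ∃ i j : Fin q, i ≠ j ∧ g (u i, false) = some true ∧ g (u j, false) = some true) :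
    ¬ BreaksOn (solsRestrict (psiCNF G) g) (Set.univ \ D)
        {x | ∃ i : Fin q, g (u i, false) = some true ∧ x = (w i, true)} := by
  classical
  rintro ⟨H₁, H₂, S₁, S₂, -, -, hU₁, hU₂, -, -, hdisj, hunion, hprod,
    ⟨y₁, ⟨i, hgi, rfl⟩, hiS₁⟩, ⟨y₂, ⟨j, hgj, rfl⟩, hjS₂⟩⟩
  obtain ⟨f, hgf⟩ := hg0
  have hgnone : ∀ x, x ∉ D → g x = none := by
    intro x hx
    by_contra h
    exact hx (hgdom ▸ (h : x ∈ g.dom))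
  have hgsome : ∀ x ∈ D, ∃ b, g x = some b := by
    intro x hx
    have hx' : x ∈ g.dom := by rw [hgdom]; exact hx
    exact Option.ne_none_iff_exists'.mp hx'
  -- values of combined assignments
  have hvalD : ∀ (h : Asg (V × Bool)) (x : V × Bool), ∀ b, g x = some b →
      Asg.totalize (g.union h) x = b := by
    intro h x b hb
    simp [Asg.totalize, Asg.union, hb]
  have hvalnD : ∀ (h : Asg (V × Bool)) (x : V × Bool), x ∉ D →
      Asg.totalize (g.union h) x = (h x).getD false := by
    intro h x hx
    simp [Asg.totalize, Asg.union, hgnone x hx]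
  -- all variables occur in psiCNF
  have hC2mem : ({l | ∃ v : V, l = ((v, true), false)} : Clause (V × Bool)) ∈ psiCNF G :=
    Or.inr (Set.mem_insert_of_mem _ rfl)
  have hC1mem : ({l | ∃ v : V, l = ((v, false), false)} : Clause (V × Bool)) ∈ psiCNF G :=
    Or.inr (Set.mem_insert _ _)
  have hvars : cnfVars (psiCNF G) = Set.univ := by
    ext x
    simp only [Set.mem_univ, iff_true]
    rcases x with ⟨v, b⟩
    cases b
    · exact ⟨_, hC1mem, false, ⟨v, rfl⟩⟩
    · exact ⟨_, hC2mem, false, ⟨v, rfl⟩⟩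
  -- the induced matching property
  have hmatch : ∀ m k : Fin q, G.Adj (u m) (w k) → m = k := by
    intro m k hadj
    have he : s(((u m : V), false), ((w k : V), true)) ∈ (doubleCover G).edgeSet := by
      rw [SimpleGraph.mem_edgeSet]
      exact ⟨hadj, by simp⟩
    have hum : (((u m : V), false) : V × Bool) ∈ endpoints M :=
      ⟨s((u m, false), (w m, true)), by rw [hM]; exact ⟨m, rfl⟩, by simp⟩
    have hwk : (((w k : V), true) : V × Bool) ∈ endpoints M :=
      ⟨s((u k, false), (w k, true)), by rw [hM]; exact ⟨k, rfl⟩, by simp⟩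
    have hin := hMind.2 _ he (by
      intro v hv
      rcases Sym2.mem_iff.mp hv with rfl | rfl
      exacts [hum, hwk])
    rw [hM] at hin
    obtain ⟨l, hl⟩ := hin
    rcases Sym2.eq_iff.mp hl with ⟨h1, h2⟩ | ⟨h1, h2⟩
    · have hm1 : m = l := hu (congrArg Prod.fst h1)
      have hk1 : k = l := hw (congrArg Prod.fst h2)
      rw [hm1, hk1]
    · exact absurd (congrArg Prod.snd h1) (by simp)
  -- the fooling solutions
  set hfun : Fin q → Asg (V × Bool) := fun k x =>
    if x ∈ D then none else if x = (w k, true) then some false else some true with hfdef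
  have hmem : ∀ k : Fin q, g (u k, false) = some true →
      hfun k ∈ solsRestrict (psiCNF G) g := by
    intro k hk
    constructor
    · rw [hvars, hgdom]
      ext x
      simp only [Asg.dom, Set.mem_setOf_eq, hfdef, Set.mem_diff, Set.mem_univ, true_and]
      by_cases hx : x ∈ D
      · simp [hx]
      · rcases eq_or_ne x (w k, true) with rfl | hne
        · simp [hx]
        · simp [hx, hne]
    · intro C hC
      rcases hC with ⟨e, he, rfl⟩ | hC
      · -- edge clauses
        revert he
        induction e using Sym2.ind with
        | _ p q' =>
        intro he
        rw [SimpleGraph.mem_edgeSet] at he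
        obtain ⟨hadj, hne⟩ := he
        have A : ∀ x y : V, G.Adj x y →
            Asg.totalize (g.union (hfun k)) ((x, false)) = true ∨
            Asg.totalize (g.union (hfun k)) ((y, true)) = true := by
          intro x y hxy
          by_cases hyD : (y, true) ∈ D
          · exact Or.inr (hvalD _ _ true (hg1 _ hyD (fun i h => by simp at h)))
          · by_cases hyw : (( (y : V), true) : V × Bool) = (w k, true)
            · left
              by_cases hxD : (x, false) ∈ D
              · obtain ⟨b, hb⟩ := hgsome _ hxD
                cases b
                · exfalso
                  by_cases hxu : ∃ m : Fin q, ((x : V), false) = ((u m : V), false)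
                  · obtain ⟨m, hm⟩ := hxu
                    have hx1 : x = u m := congrArg Prod.fst hm
                    have hy1 : y = w k := congrArg Prod.fst hyw
                    have hmk : m = k := hmatch m k (by rw [← hx1, ← hy1]; exact hxy)
                    rw [hx1, hmk, hk] at hb
                    exact Bool.noConfusion (Option.some.inj hb)
                  · rw [hg1 _ hxD (fun i hi => hxu ⟨i, hi⟩)] at hb
                    exact Bool.noConfusion (Option.some.inj hb)
                · exact hvalD _ _ true hb
              · rw [hvalnD _ _ hxD]
                simp [hfdef, hxD]
            · right
              rw [hvalnD _ _ hyD]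
              simp [hfdef, hyD, hyw]
        rcases p with ⟨x, bx⟩
        rcases q' with ⟨y, by'⟩
        cases bx <;> cases by'
        · exact absurd rfl hne
        · have hadj' : G.Adj x y := hadj
          rcases A x y hadj' with h | h
          · exact ⟨((x, false), true), ⟨(x, false), Sym2.mem_mk_left _ _, rfl⟩, h⟩
          · exact ⟨((y, true), true), ⟨(y, true), Sym2.mem_mk_right _ _, rfl⟩, h⟩
        · have hadj' : G.Adj x y := hadj
          rcases A y x hadj'.symm with h | h
          · exact ⟨((y, false), true), ⟨(y, false), Sym2.mem_mk_right _ _, rfl⟩, h⟩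
          · exact ⟨((x, true), true), ⟨(x, true), Sym2.mem_mk_left _ _, rfl⟩, h⟩
        · exact absurd rfl hne
      · rcases hC with rfl | rfl
        · -- all-negative clause on V[1]
          exact ⟨((u f, false), false), ⟨u f, rfl⟩, hvalD _ _ false hgf⟩
        · -- all-negative clause on V[2]
          refine ⟨((w k, true), false), ⟨w k, rfl⟩, ?_⟩
          rw [hvalnD _ _ (hD2 k)]
          simp [hfdef, hD2 k]
  -- decompose the two fooling solutions inside the rectangle
  have hi := hmem i hgi
  have hj := hmem j hgj
  rw [hprod] at hi hj
  obtain ⟨ai, hai, bi, hbi, hieq⟩ := hi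
  obtain ⟨aj, haj, bj, hbj, hjeq⟩ := hj
  have hmix : Asg.union aj bi ∈ solsRestrict (psiCNF G) g := by
    rw [hprod]
    exact ⟨aj, haj, bi, hbi, rfl⟩
  obtain ⟨-, hsat⟩ := hmix
  obtain ⟨l, hl, hlv⟩ := hsat _ hC2mem
  obtain ⟨v, rfl⟩ := hl
  have hvt : Asg.totalize (g.union (Asg.union aj bi)) (v, true) = true := by
    by_cases hvD : (v, true) ∈ D
    · exact hvalD _ _ true (hg1 _ hvD (fun i h => by simp at h))
    · rw [hvalnD _ _ hvD]
      have hvS : ((v : V), true) ∈ S₁ ∪ S₂ := by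
        rw [hunion]
        exact ⟨trivial, hvD⟩
      have hdisj' : ∀ x : V × Bool, x ∈ S₁ → x ∈ S₂ → False := by
        intro x h1 h2
        have : x ∈ S₁ ∩ S₂ := ⟨h1, h2⟩
        rw [hdisj] at this
        exact this
      rcases hvS with hv1 | hv2
      · have hajd : aj (v, true) ≠ none := by
          have hd := hU₁ aj haj
          rw [show S₁ = aj.dom from (hd).symm] at hv1
          exact hv1
        obtain ⟨b, hb⟩ := Option.ne_none_iff_exists'.mp hajd
        have hju : (Asg.union aj bj) (v, true) = some b := by
          simp [Asg.union, hb]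
        rw [hjeq] at hju
        have hvne : ((v : V), true) ≠ ((w j : V), true) := by
          intro h
          rw [h] at hv1
          exact hdisj' _ hv1 hjS₂
        rw [hfdef] at hju
        simp only [hvD, if_false, hvne, if_neg hvne] at hju
        have hb' : b = true := (Option.some.inj hju).symm
        simp [Asg.union, hb, hb']
      · have haid : ai (v, true) = none := by
          by_contra h
          have hd := hU₁ ai hai
          exact hdisj' _ (hd ▸ (h : (v, true) ∈ ai.dom)) hv2
        have hajn : aj (v, true) = none := by
          by_contra h
          have hd := hU₁ aj haj
          exact hdisj' _ (hd ▸ (h : (v, true) ∈ aj.dom)) hv2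
        have hiu : (Asg.union ai bi) (v, true) = bi (v, true) := by
          simp [Asg.union, haid]
        rw [hieq] at hiu
        have hvne : ((v : V), true) ≠ ((w i : V), true) := by
          intro h
          rw [h] at hv2
          exact hdisj' _ hiS₁ hv2
        rw [hfdef] at hiu
        simp only [hvD, if_false, if_neg hvne] at hiu
        simp [Asg.union, hajn, ← hiu]
  rw [hlv] at hvt
  exact Bool.noConfusion hvt
end

section
/- Every CNF φ with at most p clauses over a finite set of n variables can be represented by a decision tree over var(φ) of size at most 2·(n + n² + ⋯ + n^p) + 1; in particular, of size at most 5·n^p whenever n ≥ 2 and p ≥ 1. -/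
namespace Stmt8

variable {X : Type*} [DecidableEq X]

/-- Restrict a clause by `x := b`: `none` if satisfied, else remove variable `x`. -/
def restC (x : X) (b : Bool) (C : List (X × Bool)) : Option (List (X × Bool)) :=
  if (x, b) ∈ C then none else some (C.filter (fun l => l.1 ≠ x))

/-- Restrict a formula (list of clauses) by `x := b`. -/
def restF (x : X) (b : Bool) (φ : List (List (X × Bool))) : List (List (X × Bool)) :=
  φ.filterMap (restC x b)

lemma mem_restF {x : X} {b : Bool} {φ : List (List (X × Bool))} {C' : List (X × Bool)} :
    C' ∈ restF x b φ ↔ ∃ C ∈ φ, restC x b C = some C' := by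
  simp [restF, List.mem_filterMap]

lemma restC_eq_some {x : X} {b : Bool} {C C' : List (X × Bool)}
    (h : restC x b C = some C') : (x, b) ∉ C ∧ C' = C.filter (fun l => l.1 ≠ x) := by
  unfold restC at h
  split at h
  · exact absurd h (by simp)
  · exact ⟨by assumption, (Option.some.inj h).symm⟩

lemma sumLen_restF_le (x : X) (b : Bool) (φ : List (List (X × Bool))) :
    ((restF x b φ).map List.length).sum ≤ (φ.map List.length).sum := by
  induction φ with
  | nil => simp [restF]
  | cons C φ ih =>
    rw [restF, List.filterMap_cons]
    cases h : restC x b C with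
    | none => exact le_trans ih (by simp)
    | some C' =>
      have hlen : C'.length ≤ C.length := by
        rw [(restC_eq_some h).2]; exact List.length_filter_le _ _
      simp only [List.map_cons, List.sum_cons]
      exact Nat.add_le_add hlen ih

lemma length_restF_le (x : X) (b : Bool) (φ : List (List (X × Bool))) :
    (restF x b φ).length ≤ φ.length := List.length_filterMap_le _ _

/-- Build a decision tree for a formula, treating the head clause as current. -/
def build : List (List (X × Bool)) → DTree X
  | [] => .leaf true
  | [] :: _ => .leaf false
  | ((x, b) :: C) :: φ =>
    let tsat := build (restF x b φ)
    let tuns := build (restF x (!b) (C :: φ))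
    if b then .node x tuns tsat else .node x tsat tuns
termination_by φ => ((φ.map List.length).sum, φ.length)
decreasing_by
  · refine Prod.Lex.left _ _ ?_
    calc ((restF x b φ).map List.length).sum ≤ (φ.map List.length).sum :=
          sumLen_restF_le x b φ
      _ < ((((x, b) :: C) :: φ).map List.length).sum := by simp
  · refine Prod.Lex.left _ _ ?_
    calc ((restF x (!b) (C :: φ)).map List.length).sum
        ≤ ((C :: φ).map List.length).sum := sumLen_restF_le x (!b) (C :: φ)
      _ < ((((x, b) :: C) :: φ).map List.length).sum := by simp

/-- Satisfaction of a clause by a total assignment. -/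
def satC (a : X → Bool) (C : List (X × Bool)) : Prop := ∃ l ∈ C, a l.1 = l.2

/-- Satisfaction of a formula. -/
def satL (a : X → Bool) (φ : List (List (X × Bool))) : Prop := ∀ C ∈ φ, satC a C

lemma satL_nil (a : X → Bool) : satL a [] := fun C hC => absurd hC List.not_mem_nil

lemma satL_cons {a : X → Bool} {C : List (X × Bool)} {φ : List (List (X × Bool))} :
    satL a (C :: φ) ↔ satC a C ∧ satL a φ := by
  constructor
  · exact fun h => ⟨h C (List.mem_cons_self), fun D hD => h D (List.mem_cons_of_mem _ hD)⟩
  · rintro ⟨h1, h2⟩ D hD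
    rcases List.mem_cons.1 hD with rfl | hD
    · exact h1
    · exact h2 D hD

lemma satL_restF {a : X → Bool} {x : X} {b : Bool} (hax : a x = b)
    {φ : List (List (X × Bool))} : satL a (restF x b φ) ↔ satL a φ := by
  constructor
  · intro h C hC
    cases hmem : restC x b C with
    | none =>
      have : (x, b) ∈ C := by
        by_contra hc; simp [restC, hc] at hmem
      exact ⟨(x, b), this, hax⟩
    | some C' =>
      obtain ⟨l, hl, hal⟩ := h C' (mem_restF.2 ⟨C, hC, hmem⟩)
      rw [(restC_eq_some hmem).2] at hl
      exact ⟨l, (List.mem_filter.1 hl).1, hal⟩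
  · intro h C' hC'
    obtain ⟨C, hC, hmem⟩ := mem_restF.1 hC'
    obtain ⟨hnot, rfl⟩ := restC_eq_some hmem
    obtain ⟨l, hl, hal⟩ := h C hC
    refine ⟨l, List.mem_filter.2 ⟨hl, ?_⟩, hal⟩
    simp only [decide_eq_true_eq]
    intro hx
    apply hnot
    have : l = (x, b) := by
      have : l.2 = b := by rw [← hal, hx, hax]
      exact Prod.ext hx this
    rwa [this] at hl

lemma eval_build_cons (x : X) (b : Bool) (C : List (X × Bool))
    (φ : List (List (X × Bool))) (a : X → Bool)
    (ihsat : (build (restF x b φ)).eval a = true ↔ satL a (restF x b φ))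
    (ihuns : (build (restF x (!b) (C :: φ))).eval a = true ↔ satL a (restF x (!b) (C :: φ))) :
    (build (((x, b) :: C) :: φ)).eval a = true ↔ satL a (((x, b) :: C) :: φ) := by
  by_cases hax : a x = b
  · have heval : (build (((x, b) :: C) :: φ)).eval a = (build (restF x b φ)).eval a := by
      cases b <;> simp [build, DTree.eval, hax]
    rw [heval, ihsat, satL_restF hax, satL_cons]
    exact ⟨fun h => ⟨⟨(x, b), List.mem_cons_self, hax⟩, h⟩, fun h => h.2⟩
  · have hax : a x = !b := by cases b <;> cases h : a x <;> simp_all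
    have heval : (build (((x, b) :: C) :: φ)).eval a
        = (build (restF x (!b) (C :: φ))).eval a := by
      cases b <;> simp [build, DTree.eval] <;> simp [show a x = _ from hax]
    rw [heval, ihuns, satL_restF hax, satL_cons, satL_cons]
    have hhead : satC a ((x, b) :: C) ↔ satC a C := by
      constructor
      · rintro ⟨l, hl, hal⟩
        rcases List.mem_cons.1 hl with rfl | hl
        · rw [hax] at hal; cases b <;> simp at hal
        · exact ⟨l, hl, hal⟩
      · rintro ⟨l, hl, hal⟩; exact ⟨l, List.mem_cons_of_mem _ hl, hal⟩
    rw [hhead]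

lemma eval_build (φ : List (List (X × Bool))) (a : X → Bool) :
    (build φ).eval a = true ↔ satL a φ := by
  induction φ using build.induct with
  | case1 => simp [build, DTree.eval, satL_nil]
  | case2 φ =>
    simp only [build, DTree.eval]
    constructor
    · intro h; exact absurd h (by simp)
    · intro h
      obtain ⟨l, hl, _⟩ := (satL_cons.1 h).1
      exact absurd hl List.not_mem_nil
  | case3 x C φ ihsat ihuns => exact eval_build_cons x true C φ a ihsat ihuns
  | case4 x b C φ hb ihsat ihuns => exact eval_build_cons x b C φ a ihsat ihuns

/-- The variable set of a formula. -/
def varsL (φ : List (List (X × Bool))) : Set X := {x | ∃ C ∈ φ, ∃ bb, (x, bb) ∈ C}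

lemma varsL_restF_subset (x : X) (b : Bool) (φ : List (List (X × Bool))) :
    varsL (restF x b φ) ⊆ varsL φ \ {x} := by
  rintro y ⟨C', hC', bb, hy⟩
  obtain ⟨C, hC, hmem⟩ := mem_restF.1 hC'
  obtain ⟨-, rfl⟩ := restC_eq_some hmem
  obtain ⟨hyC, hyx⟩ := List.mem_filter.1 hy
  refine ⟨⟨C, hC, bb, hyC⟩, ?_⟩
  simpa using hyx

lemma varsOf_build_cons (x : X) (b : Bool) (C : List (X × Bool))
    (φ : List (List (X × Bool)))
    (ihsat : (build (restF x b φ)).varsOf ⊆ varsL (restF x b φ))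
    (ihuns : (build (restF x (!b) (C :: φ))).varsOf ⊆ varsL (restF x (!b) (C :: φ))) :
    (build (((x, b) :: C) :: φ)).varsOf ⊆ varsL (((x, b) :: C) :: φ) := by
  have hsub1 : varsL (restF x b φ) ⊆ varsL (((x, b) :: C) :: φ) := by
    refine le_trans (varsL_restF_subset x b φ) ?_
    rintro y ⟨⟨D, hD, bb, hy⟩, -⟩
    exact ⟨D, List.mem_cons_of_mem _ hD, bb, hy⟩
  have hsub2 : varsL (restF x (!b) (C :: φ)) ⊆ varsL (((x, b) :: C) :: φ) := by
    refine le_trans (varsL_restF_subset x (!b) (C :: φ)) ?_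
    rintro y ⟨⟨D, hD, bb, hy⟩, -⟩
    rcases List.mem_cons.1 hD with heq | hD
    · exact ⟨(x, b) :: C, List.mem_cons_self, bb,
        List.mem_cons_of_mem _ (heq ▸ hy)⟩
    · exact ⟨D, List.mem_cons_of_mem _ hD, bb, hy⟩
  have hxmem : x ∈ varsL (((x, b) :: C) :: φ) :=
    ⟨(x, b) :: C, List.mem_cons_self, b, List.mem_cons_self⟩
  have hnode : ∀ t0 t1 : DTree X, t0.varsOf ⊆ varsL (((x, b) :: C) :: φ) →
      t1.varsOf ⊆ varsL (((x, b) :: C) :: φ) →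
      (DTree.node x t0 t1).varsOf ⊆ varsL (((x, b) :: C) :: φ) := by
    intro t0 t1 h0 h1 y hy
    simp only [DTree.varsOf, Set.mem_union, Set.mem_singleton_iff] at hy
    rcases hy with (rfl | hy) | hy
    · exact hxmem
    · exact h0 hy
    · exact h1 hy
  cases b <;> simp only [build, if_true, if_false, Bool.false_eq_true] <;>
    [ exact hnode _ _ (le_trans ihsat hsub1) (le_trans ihuns hsub2);
      exact hnode _ _ (le_trans ihuns hsub2) (le_trans ihsat hsub1) ]

lemma varsOf_build (φ : List (List (X × Bool))) : (build φ).varsOf ⊆ varsL φ := by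
  induction φ using build.induct with
  | case1 => simp [build, DTree.varsOf]
  | case2 φ => simp [build, DTree.varsOf]
  | case3 x C φ ihsat ihuns => exact varsOf_build_cons x true C φ ihsat ihuns
  | case4 x b C φ hb ihsat ihuns => exact varsOf_build_cons x b C φ ihsat ihuns

lemma readOnce_build_cons (x : X) (b : Bool) (C : List (X × Bool))
    (φ : List (List (X × Bool)))
    (ihsat : (build (restF x b φ)).ReadOnce)
    (ihuns : (build (restF x (!b) (C :: φ))).ReadOnce) :
    (build (((x, b) :: C) :: φ)).ReadOnce := by
  have hx1 : x ∉ (build (restF x b φ)).varsOf := by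
    intro h
    exact ((varsL_restF_subset x b φ) (varsOf_build _ h)).2 rfl
  have hx2 : x ∉ (build (restF x (!b) (C :: φ))).varsOf := by
    intro h
    exact ((varsL_restF_subset x (!b) (C :: φ)) (varsOf_build _ h)).2 rfl
  cases b <;> simp only [build, if_true, if_false, Bool.false_eq_true] <;>
    exact ⟨by assumption, by assumption, by assumption, by assumption⟩

lemma readOnce_build (φ : List (List (X × Bool))) : (build φ).ReadOnce := by
  induction φ using build.induct with
  | case1 => simp [build, DTree.ReadOnce]
  | case2 φ => simp [build, DTree.ReadOnce]
  | case3 x C φ ihsat ihuns => exact readOnce_build_cons x true C φ ihsat ihuns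
  | case4 x b C φ hb ihsat ihuns => exact readOnce_build_cons x b C φ ihsat ihuns


/-- The size bound function `2(n + n² + ⋯ + nᵖ) + 1`. -/
def sFun (n p : ℕ) : ℕ := 2 * (∑ i ∈ Finset.range p, n ^ (i + 1)) + 1

lemma sFun_mono (n : ℕ) : Monotone (sFun n) := by
  intro p q h
  unfold sFun
  have h2 : (∑ i ∈ Finset.range p, n ^ (i + 1)) ≤ ∑ i ∈ Finset.range q, n ^ (i + 1) :=
    Finset.sum_le_sum_of_subset (Finset.range_subset_range.2 h)
  omega

/-- Number of distinct variables of a clause. -/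
def dv (C : List (X × Bool)) : ℕ := (C.map Prod.fst).toFinset.card

lemma dv_le_card [Fintype X] (C : List (X × Bool)) : dv C ≤ Fintype.card X :=
  (Finset.card_le_univ _).trans_eq Finset.card_univ

lemma dv_cons (x : X) (b : Bool) (C : List (X × Bool)) :
    dv ((x, b) :: C) = dv (C.filter (fun l => l.1 ≠ x)) + 1 := by
  unfold dv
  have h1 : ((C.filter (fun l => l.1 ≠ x)).map Prod.fst).toFinset
      = ((C.map Prod.fst).toFinset).erase x := by
    ext y
    simp only [List.mem_toFinset, List.mem_map, List.mem_filter, Finset.mem_erase,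
      decide_eq_true_eq]
    constructor
    · rintro ⟨l, ⟨hl, hlx⟩, rfl⟩
      exact ⟨hlx, l, hl, rfl⟩
    · rintro ⟨hyx, l, hl, rfl⟩
      exact ⟨l, ⟨hl, hyx⟩, rfl⟩
  rw [List.map_cons, List.toFinset_cons, h1,
    ← Finset.card_insert_of_notMem (Finset.notMem_erase x (C.map Prod.fst).toFinset)]
  congr 1
  ext y
  simp only [Finset.mem_insert, Finset.mem_erase]
  tauto

/-- No clause contains a complementary pair of literals. -/
def Good (φ : List (List (X × Bool))) : Prop :=
  ∀ C ∈ φ, ∀ x : X, ¬((x, true) ∈ C ∧ (x, false) ∈ C)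

lemma Good_restF {φ : List (List (X × Bool))} (h : Good φ) (x : X) (b : Bool) :
    Good (restF x b φ) := by
  intro C' hC' y hy
  obtain ⟨C, hC, hmem⟩ := mem_restF.1 hC'
  obtain ⟨-, rfl⟩ := restC_eq_some hmem
  exact h C hC y ⟨(List.mem_filter.1 hy.1).1, (List.mem_filter.1 hy.2).1⟩

/-- Strengthened size bound (head clause counted by its variables). -/
def Bnd (n : ℕ) : List (List (X × Bool)) → ℕ
  | [] => 1
  | C :: φ => dv C * (1 + sFun n φ.length) + 1

lemma Bnd_le_sFun [Fintype X] (φ : List (List (X × Bool))) :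
    Bnd (Fintype.card X) φ ≤ sFun (Fintype.card X) φ.length := by
  cases φ with
  | nil => simp [Bnd, sFun]
  | cons C φ =>
    have hdv : dv C ≤ Fintype.card X := dv_le_card C
    have hmul : ∀ q : ℕ, Fintype.card X * (∑ i ∈ Finset.range q, Fintype.card X ^ (i + 1))
        = ∑ i ∈ Finset.range q, Fintype.card X ^ (i + 1 + 1) := by
      intro q
      rw [Finset.mul_sum]
      refine Finset.sum_congr rfl fun i _ => ?_
      rw [pow_succ]
      ring
    have key : Fintype.card X * (1 + sFun (Fintype.card X) φ.length) + 1
        = sFun (Fintype.card X) (φ.length + 1) := by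
      unfold sFun
      rw [Finset.sum_range_succ' (fun i => Fintype.card X ^ (i + 1)) φ.length, ← hmul φ.length]
      ring
    calc Bnd (Fintype.card X) (C :: φ)
        = dv C * (1 + sFun (Fintype.card X) φ.length) + 1 := rfl
      _ ≤ Fintype.card X * (1 + sFun (Fintype.card X) φ.length) + 1 :=
          Nat.add_le_add_right (Nat.mul_le_mul_right _ hdv) 1
      _ = sFun (Fintype.card X) (φ.length + 1) := key
      _ = sFun (Fintype.card X) (C :: φ).length := by simp

lemma size_build_cons [Fintype X] (x : X) (b : Bool) (C : List (X × Bool))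
    (φ : List (List (X × Bool))) (hG : Good (((x, b) :: C) :: φ))
    (ihsat : Good (restF x b φ) →
      (build (restF x b φ)).size ≤ Bnd (Fintype.card X) (restF x b φ))
    (ihuns : Good (restF x (!b) (C :: φ)) →
      (build (restF x (!b) (C :: φ))).size ≤ Bnd (Fintype.card X) (restF x (!b) (C :: φ))) :
    (build (((x, b) :: C) :: φ)).size ≤ Bnd (Fintype.card X) (((x, b) :: C) :: φ) := by
  have hGφ : Good φ := fun D hD => hG D (List.mem_cons_of_mem _ hD)
  have hGC : Good (C :: φ) := by
    intro D hD y hy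
    rcases List.mem_cons.1 hD with heq | hD
    · exact hG ((x, b) :: C) (List.mem_cons_self) y
        ⟨List.mem_cons_of_mem _ (heq ▸ hy.1), List.mem_cons_of_mem _ (heq ▸ hy.2)⟩
    · exact hG D (List.mem_cons_of_mem _ hD) y hy
  have hxC : (x, !b) ∉ C := by
    intro h
    refine hG ((x, b) :: C) (List.mem_cons_self) x ?_
    cases b
    · exact ⟨List.mem_cons_of_mem _ h, List.mem_cons_self⟩
    · exact ⟨List.mem_cons_self, List.mem_cons_of_mem _ h⟩
  have hrest : restF x (!b) (C :: φ) = (C.filter (fun l => l.1 ≠ x)) :: restF x (!b) φ := by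
    rw [restF, List.filterMap_cons, show restC x (!b) C = some (C.filter (fun l => l.1 ≠ x))
      from by rw [restC, if_neg hxC]]
    rfl
  set N := Fintype.card X
  set A := sFun N φ.length with hA
  set d := dv (C.filter (fun l => l.1 ≠ x)) with hd
  have hS1 : (build (restF x b φ)).size ≤ A := by
    calc (build (restF x b φ)).size ≤ Bnd N (restF x b φ) := ihsat (Good_restF hGφ x b)
      _ ≤ sFun N (restF x b φ).length := Bnd_le_sFun _
      _ ≤ A := sFun_mono N (length_restF_le x b φ)
  have hS2 : (build (restF x (!b) (C :: φ))).size ≤ d * (1 + A) + 1 := by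
    calc (build (restF x (!b) (C :: φ))).size
        ≤ Bnd N (restF x (!b) (C :: φ)) := ihuns (Good_restF hGC x (!b))
      _ = d * (1 + sFun N (restF x (!b) φ).length) + 1 := by rw [hrest]; rfl
      _ ≤ d * (1 + A) + 1 := by
          have := sFun_mono N (length_restF_le x (!b) φ)
          exact Nat.add_le_add_right (Nat.mul_le_mul_left _ (by omega)) 1
  have hBnd : Bnd N (((x, b) :: C) :: φ) = (d + 1) * (1 + A) + 1 := by
    show dv ((x, b) :: C) * (1 + A) + 1 = (d + 1) * (1 + A) + 1
    rw [dv_cons]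
  have hsz : (build (((x, b) :: C) :: φ)).size
      = 1 + (build (restF x b φ)).size + (build (restF x (!b) (C :: φ))).size := by
    cases b <;> simp [build, DTree.size] <;> omega
  rw [hsz, hBnd]
  have hexp : (d + 1) * (1 + A) + 1 = d * (1 + A) + A + 2 := by ring
  rw [hexp]
  set P := d * (1 + A)
  omega

lemma size_build_le [Fintype X] (φ : List (List (X × Bool))) (hG : Good φ) :
    (build φ).size ≤ sFun (Fintype.card X) φ.length := by
  refine le_trans ?_ (Bnd_le_sFun φ)
  induction φ using build.induct with
  | case1 => simp [build, DTree.size, Bnd]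
  | case2 φ => simp [build, DTree.size, Bnd]
  | case3 x C φ ihsat ihuns =>
    exact size_build_cons x true C φ hG
      (fun h => le_trans (ihsat h) (le_refl _)) (fun h => le_trans (ihuns h) (le_refl _))
  | case4 x b C φ hb ihsat ihuns =>
    exact size_build_cons x b C φ hG
      (fun h => le_trans (ihsat h) (le_refl _)) (fun h => le_trans (ihuns h) (le_refl _))

lemma sum_pow_le {n p : ℕ} (hn : 2 ≤ n) (hp : 1 ≤ p) :
    ∑ i ∈ Finset.range p, n ^ (i + 1) ≤ 2 * n ^ p := by
  induction p, hp using Nat.le_induction with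
  | base => simp [Finset.sum_range_one]; omega
  | succ q hq ih =>
    rw [Finset.sum_range_succ]
    have h2 : 2 * n ^ q ≤ n ^ (q + 1) := by
      rw [pow_succ, mul_comm]
      exact Nat.mul_le_mul_left _ hn
    have h3 : 2 * n ^ (q + 1) = n ^ (q + 1) + n ^ (q + 1) := by ring
    omega

end Stmt8

/-- every CNF with at most `p` clauses over `n` variables is represented
by a (read-once) decision tree of size at most `2(n + n² + ⋯ + nᵖ) + 1`, hence of size
at most `5·nᵖ` whenever `n ≥ 2` and `p ≥ 1`. -/
theorem stmt8 {X : Type*} [Fintype X] (n p : ℕ) (hn : Fintype.card X = n)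
    (φ : Finset (Finset (X × Bool))) (hp : φ.card ≤ p) :
    ∃ t : DTree X, t.ReadOnce ∧
      (∀ a : X → Bool, t.eval a = true ↔ ∀ C ∈ φ, ∃ l ∈ C, a l.1 = l.2) ∧
      t.size ≤ 2 * (∑ i ∈ Finset.range p, n ^ (i + 1)) + 1 ∧
      (2 ≤ n → 1 ≤ p → t.size ≤ 5 * n ^ p) := by
  classical
  subst hn
  set L : List (List (X × Bool)) :=
    ((φ.filter (fun C => ∀ x : X, ¬((x, true) ∈ C ∧ (x, false) ∈ C))).toList).map
      Finset.toList with hL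
  have hGood : Stmt8.Good L := by
    intro D hD y hy
    obtain ⟨C, hC, rfl⟩ := List.mem_map.1 hD
    have h2 := (Finset.mem_filter.1 (Finset.mem_toList.1 hC)).2
    exact h2 y ⟨Finset.mem_toList.1 hy.1, Finset.mem_toList.1 hy.2⟩
  have hlen : L.length ≤ p := by
    have : L.length = (φ.filter (fun C => ∀ x : X, ¬((x, true) ∈ C ∧ (x, false) ∈ C))).card := by
      rw [hL, List.length_map, Finset.length_toList]
    rw [this]
    exact le_trans (Finset.card_filter_le _ _) hp
  have hsize : (Stmt8.build L).size ≤ 2 * (∑ i ∈ Finset.range p, (Fintype.card X) ^ (i + 1)) + 1 := by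
    have h1 := Stmt8.size_build_le L hGood
    have h2 := Stmt8.sFun_mono (Fintype.card X) hlen
    have h3 : Stmt8.sFun (Fintype.card X) p
        = 2 * (∑ i ∈ Finset.range p, (Fintype.card X) ^ (i + 1)) + 1 := rfl
    omega
  refine ⟨Stmt8.build L, Stmt8.readOnce_build L, ?_, hsize, ?_⟩
  · intro a
    rw [Stmt8.eval_build]
    constructor
    · intro h C hC
      by_cases htaut : ∀ x : X, ¬((x, true) ∈ C ∧ (x, false) ∈ C)
      · have hmem : C.toList ∈ L := by
          rw [hL]
          exact List.mem_map.2 ⟨C, Finset.mem_toList.2 (Finset.mem_filter.2 ⟨hC, htaut⟩), rfl⟩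
        obtain ⟨l, hl, hal⟩ := h _ hmem
        exact ⟨l, Finset.mem_toList.1 hl, hal⟩
      · push_neg at htaut
        obtain ⟨x, hx1, hx2⟩ := htaut
        cases hax : a x
        · exact ⟨(x, false), hx2, by simp [hax]⟩
        · exact ⟨(x, true), hx1, by simp [hax]⟩
    · intro h D hD
      obtain ⟨C, hC, rfl⟩ := List.mem_map.1 hD
      obtain ⟨l, hl, hal⟩ := h C (Finset.mem_filter.1 (Finset.mem_toList.1 hC)).1
      exact ⟨l, Finset.mem_toList.2 hl, hal⟩
  · intro h2 hp1
    have hsum := Stmt8.sum_pow_le h2 hp1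
    have hM : 1 ≤ (Fintype.card X) ^ p := Nat.one_le_pow _ _ (by omega)
    set M := (Fintype.card X) ^ p
    set S := ∑ i ∈ Finset.range p, (Fintype.card X) ^ (i + 1)
    omega
end

section
/- Let G be a finite simple graph of maximum degree at most d and let M be a matching of G. Then there exists M' ⊆ M such that M' is an induced matching of G and (2d+1)·|M'| ≥ |M|. -/
lemma matching_subset' {V : Type*} (G : SimpleGraph V) {M M' : Set (Sym2 V)}
    (hM : IsMatchingSet G M) (h : M' ⊆ M) : IsMatchingSet G M' :=
  ⟨h.trans hM.1, fun e he f hf => hM.2 e (h he) f (h hf)⟩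

lemma empty_induced {V : Type*} (G : SimpleGraph V) :
    IsInducedMatchingSet G (∅ : Set (Sym2 V)) := by
  refine ⟨⟨by simp, by simp⟩, ?_⟩
  intro e he hv
  induction e using Sym2.ind with
  | _ x y =>
    exact absurd (hv x (Sym2.mem_mk_left x y)) (by simp [endpoints])

/-- every matching `M` of a graph of maximum degree at most `d` contains
an induced matching `M'` with `(2d+1)·|M'| ≥ |M|`. -/
theorem stmt9 {V : Type*} [Fintype V] (G : SimpleGraph V) (d : ℕ)
    (hdeg : ∀ v : V, (G.neighborSet v).ncard ≤ d)
    (M : Set (Sym2 V)) (hM : IsMatchingSet G M) :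
    ∃ M' ⊆ M, IsInducedMatchingSet G M' ∧ M.ncard ≤ (2 * d + 1) * M'.ncard := by
  classical
  have main : ∀ n (M : Set (Sym2 V)), M.ncard ≤ n → IsMatchingSet G M →
      ∃ M' ⊆ M, IsInducedMatchingSet G M' ∧ M.ncard ≤ (2 * d + 1) * M'.ncard := by
    intro n
    induction n with
    | zero =>
      intro M hle hM
      have hM0 : M = ∅ := by
        have := Set.ncard_eq_zero (Set.toFinite M)
        exact this.mp (Nat.le_zero.mp hle)
      exact ⟨∅, by simp, empty_induced G, by simp [hM0]⟩
    | succ n ih =>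
      intro M hle hM
      by_cases hME : M = ∅
      · exact ⟨∅, by simp, empty_induced G, by simp [hME]⟩
      obtain ⟨e, he⟩ := Set.nonempty_iff_ne_empty.mpr hME
      obtain ⟨⟨a, b⟩, rfl⟩ := e.exists_rep
      have hab : G.Adj a b := hM.1 he
      set N : Set (Sym2 V) :=
        {f ∈ M | f = s(a, b) ∨ ∃ y ∈ f, G.Adj a y ∨ G.Adj b y} with hN
      have heN : s(a, b) ∈ N := ⟨he, Or.inl rfl⟩
      have hNM : N ⊆ M := fun f hf => hf.1
      -- bound on |N|
      have hNcard : N.ncard ≤ 2 * d + 1 := by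
        have hmap : ∀ f ∈ N \ {s(a, b)}, ∃ y ∈ f, G.Adj a y ∨ G.Adj b y := by
          rintro f ⟨⟨hfM, hcase⟩, hne⟩
          rcases hcase with h | h
          · exact absurd h hne
          · exact h
        set F : Sym2 V → V := fun f =>
          if h : ∃ y ∈ f, G.Adj a y ∨ G.Adj b y then h.choose else a with hF
        have h1 : (N \ {s(a, b)}).ncard ≤ (G.neighborSet a ∪ G.neighborSet b).ncard := by
          apply Set.ncard_le_ncard_of_injOn F
          · intro f hf
            have h := hmap f hf
            have hy := h.choose_spec
            simp only [hF, dif_pos h]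
            rcases hy.2 with h' | h'
            · exact Or.inl h'
            · exact Or.inr h'
          · intro f hf f' hf' hFF
            have h := hmap f hf
            have h' := hmap f' hf'
            have hyf : h.choose ∈ f := h.choose_spec.1
            have hyf' : h'.choose ∈ f' := h'.choose_spec.1
            simp only [hF, dif_pos h, dif_pos h'] at hFF
            by_contra hne
            exact hM.2 f (hNM hf.1) f' (hNM hf'.1) hne h.choose hyf (hFF ▸ hyf')
        have h2 : (G.neighborSet a ∪ G.neighborSet b).ncard ≤ 2 * d := by
          calc (G.neighborSet a ∪ G.neighborSet b).ncard
              ≤ (G.neighborSet a).ncard + (G.neighborSet b).ncard := Set.ncard_union_le _ _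
            _ ≤ 2 * d := by have := hdeg a; have := hdeg b; omega
        have h3 : N ⊆ insert (s(a, b)) (N \ {s(a, b)}) := by
          intro f hf
          by_cases hfe : f = s(a, b)
          · exact hfe ▸ Set.mem_insert _ _
          · exact Set.mem_insert_of_mem _ ⟨hf, hfe⟩
        calc N.ncard ≤ (insert (s(a, b)) (N \ {s(a, b)})).ncard :=
              Set.ncard_le_ncard h3 (Set.toFinite _)
          _ ≤ (N \ {s(a, b)}).ncard + 1 := Set.ncard_insert_le _ _
          _ ≤ 2 * d + 1 := by omega
      -- recurse on M \ N
      set M₂ : Set (Sym2 V) := M \ N with hM₂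
      have hM₂sub : M₂ ⊆ M := Set.diff_subset
      have hM₂lt : M₂.ncard < M.ncard := by
        apply Set.ncard_lt_ncard _ (Set.toFinite M)
        exact ⟨hM₂sub, fun hsub => (hsub he).2 heN⟩
      obtain ⟨M'', hM''sub, hM''ind, hM''card⟩ :=
        ih M₂ (by omega) (matching_subset' G hM hM₂sub)
      have heM'' : s(a, b) ∉ M'' := fun h => (hM''sub h).2 heN
      refine ⟨insert (s(a, b)) M'', ?_, ⟨?_, ?_⟩, ?_⟩
      · exact Set.insert_subset he (hM''sub.trans hM₂sub)
      · exact matching_subset' G hM (Set.insert_subset he (hM''sub.trans hM₂sub))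
      · -- induced property
        intro g hg hv
        induction g using Sym2.ind with
        | _ x y =>
          have hxy : G.Adj x y := hg
          have hx := hv x (Sym2.mem_mk_left x y)
          have hy := hv y (Sym2.mem_mk_right x y)
          obtain ⟨fx, hfx, hxfx⟩ := hx
          obtain ⟨fy, hfy, hyfy⟩ := hy
          -- helper: a vertex adjacent to a or b cannot be an endpoint of M''
          have hkill : ∀ z f, f ∈ M'' → z ∈ f → ¬ (G.Adj a z ∨ G.Adj b z) := by
            intro z f hf hz hadj
            exact (hM''sub hf).2 ⟨(hM''sub hf).1, Or.inr ⟨z, hz, hadj⟩⟩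
          rcases Set.mem_insert_iff.mp hfx with hfx | hfx <;>
            rcases Set.mem_insert_iff.mp hfy with hfy | hfy
          · -- both x, y in s(a,b)
            subst hfx; subst hfy
            left
            rcases Sym2.mem_iff.mp hxfx with rfl | rfl <;>
              rcases Sym2.mem_iff.mp hyfy with rfl | rfl
            · exact absurd rfl hxy.ne
            · rfl
            · exact Sym2.eq_swap
            · exact absurd rfl hxy.ne
          · -- x ∈ s(a,b), y in M'' edge: contradiction
            subst hfx
            exfalso
            apply hkill y fy hfy hyfy
            rcases Sym2.mem_iff.mp hxfx with rfl | rfl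
            · exact Or.inl hxy
            · exact Or.inr hxy
          · -- y ∈ s(a,b), x in M'' edge: contradiction
            subst hfy
            exfalso
            apply hkill x fx hfx hxfx
            rcases Sym2.mem_iff.mp hyfy with rfl | rfl
            · exact Or.inl hxy.symm
            · exact Or.inr hxy.symm
          · -- both in M'': use induced property of M''
            right
            apply hM''ind.2 _ hg
            intro v hv'
            rcases Sym2.mem_iff.mp hv' with rfl | rfl
            · exact ⟨fx, hfx, hxfx⟩
            · exact ⟨fy, hfy, hyfy⟩
      · -- cardinality
        have hsplit : (M \ N).ncard = M.ncard - N.ncard :=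
          Set.ncard_diff hNM (Set.toFinite N)
        have hNle : N.ncard ≤ M.ncard := Set.ncard_le_ncard hNM (Set.toFinite M)
        have hins : (insert (s(a, b)) M'').ncard = M''.ncard + 1 :=
          Set.ncard_insert_of_notMem heM'' (Set.toFinite _)
        rw [hins]
        have heq : M.ncard = M₂.ncard + N.ncard := by
          rw [hM₂, hsplit]; omega
        calc M.ncard = M₂.ncard + N.ncard := heq
          _ ≤ (2 * d + 1) * M''.ncard + (2 * d + 1) := by omega
          _ = (2 * d + 1) * (M''.ncard + 1) := by ring
  exact main M.ncard M le_rfl hM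
end

section
/- Let G be a finite simple graph of maximum degree at most d. Then for every linear order π of V(G) and every matching M of G crossing π there is an induced matching M' ⊆ M of G crossing π with (2d+1)·|M'| ≥ |M|. Consequently, (2d+1)·lsimw(G) ≥ lmmw(G). -/
/-- in a graph of maximum degree at most `d`, every matching crossing a
linear order `π` contains an induced matching crossing `π` that is smaller by a factor
of at most `2d+1`; consequently `(2d+1)·lsimw(G) ≥ lmmw(G)`. -/
theorem stmt10 {V : Type*} [Fintype V] (G : SimpleGraph V) (d : ℕ)
    (hdeg : ∀ v : V, (G.neighborSet v).ncard ≤ d) :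
    (∀ (π : LinearOrder V) (M : Set (Sym2 V)), IsMatchingSet G M → Crosses π M →
        ∃ M' ⊆ M, IsInducedMatchingSet G M' ∧ Crosses π M' ∧
          M.ncard ≤ (2 * d + 1) * M'.ncard) ∧
      lmmw G ≤ (2 * d + 1) * lsimw G := by
  classical
  have key : ∀ (π : LinearOrder V) (M : Set (Sym2 V)), IsMatchingSet G M → Crosses π M →
      ∃ M' ⊆ M, IsInducedMatchingSet G M' ∧ Crosses π M' ∧
        M.ncard ≤ (2 * d + 1) * M'.ncard := by
    intro π M hM hC
    set Conf : Sym2 V → Sym2 V → Prop :=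
      fun e f => e ≠ f ∧ ∃ x ∈ e, ∃ y ∈ f, G.Adj x y with hConfdef
    have hConfSymm : ∀ e f, Conf e f → Conf f e := by
      rintro e f ⟨hne, x, hx, y, hy, hadj⟩
      exact ⟨hne.symm, y, hy, x, hx, hadj.symm⟩
    have hMfin : M.Finite := Set.toFinite M
    set Mf : Finset (Sym2 V) := hMfin.toFinset with hMfdef
    have hMfMem : ∀ e, e ∈ Mf ↔ e ∈ M := fun e => hMfin.mem_toFinset
    set 𝒜 : Set (Finset (Sym2 V)) :=
      {A | ↑A ⊆ M ∧ ∀ e ∈ A, ∀ f ∈ A, ¬ Conf e f} with h𝒜def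
    have hEmpty : (∅ : Finset (Sym2 V)) ∈ 𝒜 := ⟨by simp, by simp⟩
    obtain ⟨A, hA𝒜, hAmax⟩ :=
      Set.Finite.exists_maximalFor Finset.card 𝒜 (Set.toFinite 𝒜) ⟨∅, hEmpty⟩
    obtain ⟨hAM, hInd⟩ := hA𝒜
    have hMax : ∀ e ∈ M, e ∉ A → ∃ f ∈ A, Conf e f := by
      intro e heM heA
      by_contra h
      push_neg at h
      have hmem : insert e A ∈ 𝒜 := by
        constructor
        · intro x hx
          rcases Finset.mem_insert.mp hx with rfl | hx
          · exact heM
          · exact hAM hx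
        · intro x hx y hy hc
          rcases Finset.mem_insert.mp hx with rfl | hx'
          · rcases Finset.mem_insert.mp hy with rfl | hy'
            · exact hc.1 rfl
            · exact h y hy' hc
          · rcases Finset.mem_insert.mp hy with rfl | hy'
            · exact h x hx' (hConfSymm _ _ hc)
            · exact hInd x hx' y hy' hc
      have h2 := hAmax hmem (Finset.card_le_card (Finset.subset_insert e A))
      rw [Finset.card_insert_of_notMem heA] at h2
      omega
    have hnbr : ∀ v : V, (G.neighborFinset v).card ≤ d := by
      intro v
      have h := hdeg v
      rwa [Set.ncard_eq_toFinset_card'] at h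
    have hdegb : ∀ f : Sym2 V, (Mf.filter (fun e => Conf e f)).card ≤ 2 * d := by
      intro f
      obtain ⟨⟨a, b⟩, rfl⟩ := Quot.exists_rep f
      have hfab : (Quot.mk _ (a, b) : Sym2 V) = s(a, b) := rfl
      rw [hfab]
      set T : Finset V := G.neighborFinset a ∪ G.neighborFinset b with hTdef
      have hTcard : T.card ≤ 2 * d := by
        calc T.card ≤ (G.neighborFinset a).card + (G.neighborFinset b).card :=
              Finset.card_union_le _ _
          _ ≤ d + d := Nat.add_le_add (hnbr a) (hnbr b)
          _ = 2 * d := by ring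
      set i : Sym2 V → V := fun e =>
        if h : ∃ x ∈ e, G.Adj a x ∨ G.Adj b x then h.choose else a with hidef
      have hP : ∀ e ∈ Mf.filter (fun e => Conf e s(a, b)),
          ∃ x ∈ e, G.Adj a x ∨ G.Adj b x := by
        intro e he
        rw [Finset.mem_filter] at he
        obtain ⟨-, x, hx, y, hy, hadj⟩ := he.2
        rcases Sym2.mem_iff.mp hy with rfl | rfl
        · exact ⟨x, hx, Or.inl hadj.symm⟩
        · exact ⟨x, hx, Or.inr hadj.symm⟩
      have hmaps : ∀ e ∈ Mf.filter (fun e => Conf e s(a, b)), i e ∈ T := by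
        intro e he
        have h := hP e he
        have hspec := h.choose_spec
        simp only [hidef, dif_pos h]
        rcases hspec.2 with hadj | hadj
        · exact Finset.mem_union_left _ ((G.mem_neighborFinset a _).mpr hadj)
        · exact Finset.mem_union_right _ ((G.mem_neighborFinset b _).mpr hadj)
      have hinj : Set.InjOn i ↑(Mf.filter (fun e => Conf e s(a, b))) := by
        intro e1 he1 e2 he2 heq
        by_contra hne
        have h1 := hP e1 (by simpa using he1)
        have h2 := hP e2 (by simpa using he2)
        have hi1 : i e1 = h1.choose := by simp only [hidef, dif_pos h1]
        have hi2 : i e2 = h2.choose := by simp only [hidef, dif_pos h2]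
        have hx1 : h1.choose ∈ e1 := h1.choose_spec.1
        have hx2 : h2.choose ∈ e2 := h2.choose_spec.1
        have he1M : e1 ∈ M := by
          have := he1; simp only [Finset.coe_filter, Set.mem_setOf_eq] at this
          exact (hMfMem e1).mp this.1
        have he2M : e2 ∈ M := by
          have := he2; simp only [Finset.coe_filter, Set.mem_setOf_eq] at this
          exact (hMfMem e2).mp this.1
        have : h1.choose ∈ e2 := by rw [← hi1, heq, hi2]; exact hx2
        exact hM.2 e1 he1M e2 he2M hne h1.choose hx1 this
      calc (Mf.filter (fun e => Conf e s(a, b))).card ≤ T.card :=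
            Finset.card_le_card_of_injOn i hmaps hinj
        _ ≤ 2 * d := hTcard
    set φf : Sym2 V → Sym2 V := fun e =>
      if e ∈ A then e else if h : ∃ f ∈ A, Conf e f then h.choose else e with hφdef
    have hφmem : ∀ e ∈ Mf, φf e ∈ A := by
      intro e he
      by_cases hA : e ∈ A
      · simpa [hφdef, hA] using hA
      · have h := hMax e ((hMfMem e).mp he) hA
        simp only [hφdef, if_neg hA, dif_pos h]
        exact h.choose_spec.1
    have hφspec : ∀ e ∈ Mf, φf e = e ∨ Conf e (φf e) := by
      intro e he
      by_cases hA : e ∈ A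
      · left; simp [hφdef, hA]
      · right
        have h := hMax e ((hMfMem e).mp he) hA
        simp only [hφdef, if_neg hA, dif_pos h]
        exact h.choose_spec.2
    have hcard : Mf.card ≤ A.card * (2 * d + 1) := by
      rw [Finset.card_eq_sum_card_fiberwise hφmem]
      have hfib : ∀ f ∈ A, (Mf.filter (fun e => φf e = f)).card ≤ 2 * d + 1 := by
        intro f hf
        have hsub : Mf.filter (fun e => φf e = f) ⊆
            insert f (Mf.filter (fun e => Conf e f)) := by
          intro e he
          rw [Finset.mem_filter] at he
          rcases hφspec e he.1 with h | h
          · exact Finset.mem_insert.mpr (Or.inl (by rw [← he.2, h]))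
          · refine Finset.mem_insert.mpr (Or.inr ?_)
            rw [Finset.mem_filter]
            exact ⟨he.1, he.2 ▸ h⟩
        calc (Mf.filter (fun e => φf e = f)).card
            ≤ (insert f (Mf.filter (fun e => Conf e f))).card := Finset.card_le_card hsub
          _ ≤ (Mf.filter (fun e => Conf e f)).card + 1 := Finset.card_insert_le _ _
          _ ≤ 2 * d + 1 := Nat.add_le_add_right (hdegb f) 1
      calc ∑ f ∈ A, (Mf.filter (fun e => φf e = f)).card
          ≤ ∑ _f ∈ A, (2 * d + 1) := Finset.sum_le_sum hfib
        _ = A.card * (2 * d + 1) := by rw [Finset.sum_const, smul_eq_mul]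
    refine ⟨↑A, hAM, ⟨⟨fun e he => hM.1 (hAM he), ?_⟩, ?_⟩, ?_, ?_⟩
    · intro e he f hf
      exact hM.2 e (hAM he) f (hAM hf)
    · intro e heE hv
      obtain ⟨⟨x, y⟩, rfl⟩ := Quot.exists_rep e
      have hexy : (Quot.mk _ (x, y) : Sym2 V) = s(x, y) := rfl
      rw [hexy] at heE hv ⊢
      have hadj : G.Adj x y := heE
      have hne : x ≠ y := G.ne_of_adj hadj
      obtain ⟨f₁, hf₁, hxf₁⟩ := hv x (Sym2.mem_mk_left x y)
      obtain ⟨f₂, hf₂, hyf₂⟩ := hv y (Sym2.mem_mk_right x y)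
      by_cases hf : f₁ = f₂
      · subst hf
        have : f₁ = s(x, y) := (Sym2.mem_and_mem_iff hne).mp ⟨hxf₁, hyf₂⟩
        rw [← this]; exact hf₁
      · exact absurd ⟨hf, x, hxf₁, y, hyf₂, hadj⟩ (hInd f₁ hf₁ f₂ hf₂)
    · obtain ⟨P, hP, hPe⟩ := hC
      exact ⟨P, hP, fun e he => hPe e (hAM he)⟩
    · rw [Set.ncard_eq_toFinset_card M hMfin, Set.ncard_coe_finset]
      calc Mf.card ≤ A.card * (2 * d + 1) := hcard
        _ = (2 * d + 1) * A.card := Nat.mul_comm _ _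
  refine ⟨key, ?_⟩
  have hne : {k | ∃ π : LinearOrder V, ∀ M : Set (Sym2 V),
      IsInducedMatchingSet G M → Crosses π M → M.ncard ≤ k}.Nonempty := by
    refine ⟨Nat.card (Sym2 V),
      LinearOrder.lift' (Fintype.equivFin V) (Fintype.equivFin V).injective, ?_⟩
    intro M _ _
    calc M.ncard ≤ (Set.univ : Set (Sym2 V)).ncard :=
          Set.ncard_le_ncard (Set.subset_univ M) (Set.toFinite _)
      _ = Nat.card (Sym2 V) := Set.ncard_univ _
  obtain ⟨π, hπ⟩ : lsimw G ∈ {k | ∃ π : LinearOrder V, ∀ M : Set (Sym2 V),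
      IsInducedMatchingSet G M → Crosses π M → M.ncard ≤ k} := Nat.sInf_mem hne
  apply Nat.sInf_le
  refine ⟨π, fun M hM hC => ?_⟩
  obtain ⟨M', _, hindM, hcr, hcard⟩ := key π M hM hC
  exact hcard.trans (Nat.mul_le_mul_left _ (hπ M' hindM hcr))
end
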